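/- arXiv:2604.09133 — 8 statements merged into one kernel-verified Lean document; each statement's English description precedes it below -/
import Mathlib

section
/- Let (α_i) be a complex sequence in the unit sphere of the dual of c (so ∑_{i=1}^∞ |α_i| = 1, with the functional acting on c naturally via coordinates, ignoring the limit functional), and let Λ = {i : α_i = 0}. Then (α_i) attains its norm on the unit sphere of c if and only if either Λ^c is finite, or the sequence (conj(α_{i_k})/|α_{i_k}|)_{k} is convergent, where α_{i_1}, α_{i_2}, ... enumerates the nonzero entries of (α_i) in increasing order of index. -/
open Filter Topology ComplexConjugate

private lemma re_eq_norm_imp {z : ℂ} (h : z.re = ‖z‖) : z = (‖z‖ : ℂ) := by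
  have h1 : ‖z‖ ^ 2 = z.re ^ 2 + z.im ^ 2 := by
    rw [← Complex.normSq_eq_norm_sq, Complex.normSq_apply]; ring
  rw [← h] at h1
  have him : z.im = 0 := by
    have : z.im ^ 2 = 0 := by linarith
    exact pow_eq_zero_iff (by norm_num) |>.mp this
  apply Complex.ext <;> simp [him, ← h]

private lemma tsum_eq_forall {f g : ℕ → ℝ} (hf : Summable f) (hg : Summable g)
    (hle : ∀ i, f i ≤ g i) (heq : ∑' i, f i = ∑' i, g i) : ∀ i, f i = g i := by
  intro i
  by_contra hne
  exact absurd heq (ne_of_lt (Summable.tsum_lt_tsum hle (lt_of_le_of_ne (hle i) hne) hf hg))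

-- the canonical value forced on nonzero coordinates
private lemma unit_val {a : ℂ} (ha : a ≠ 0) : ‖conj a / (‖a‖ : ℂ)‖ = 1 := by
  rw [norm_div]
  simp only [RCLike.norm_conj, Complex.norm_real, norm_norm]
  rw [div_self (norm_ne_zero_iff.mpr ha)]

private lemma mul_unit_val {a : ℂ} (ha : a ≠ 0) : a * (conj a / (‖a‖ : ℂ)) = (‖a‖ : ℂ) := by
  have h0 : (‖a‖ : ℂ) ≠ 0 := by
    simpa using norm_ne_zero_iff.mpr ha
  rw [mul_div_assoc', Complex.mul_conj']
  rw [div_eq_iff h0]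
  ring

/-- **Norm attainment on `c`.**  Let `(αᵢ) ∈ ℓ¹(ℂ)` with `∑ |αᵢ| = 1`, acting on the space `c`
of convergent complex sequences (with sup norm) by `(γᵢ) ↦ ∑ αᵢ γᵢ`, and let
`Λ = {i | αᵢ = 0}`.  Then `(αᵢ)` attains its norm on the unit sphere of `c` iff either `Λᶜ`
is finite or the sequence `(conj α_{i_k}/|α_{i_k}|)_k` converges, where `i_1 < i_2 < ⋯`
enumerates the nonzero entries. -/
theorem c_dual_norm_attaining_iff
    (α : ℕ → ℂ) (hsum : Summable fun i => ‖α i‖) (hnorm : ∑' i, ‖α i‖ = 1) :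
    (∃ γ : ℕ → ℂ, (∃ L : ℂ, Tendsto γ atTop (𝓝 L)) ∧ (⨆ i, ‖γ i‖) = 1 ∧
        (∀ i, ‖γ i‖ ≤ 1) ∧ ∑' i, α i * γ i = 1) ↔
      ({i : ℕ | α i = 0}ᶜ.Finite ∨
        ∃ L : ℂ, Tendsto
          (fun k => conj (α (Nat.nth (fun i => α i ≠ 0) k)) /
            (‖α (Nat.nth (fun i => α i ≠ 0) k)‖ : ℂ)) atTop (𝓝 L)) := by
  have hcompl : {i : ℕ | α i = 0}ᶜ = setOf (fun i => α i ≠ 0) := by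
    ext i; simp [Set.mem_compl_iff]; rfl
  -- there is some nonzero coordinate
  have hex : ∃ i, α i ≠ 0 := by
    by_contra h
    push_neg at h
    simp only [h, norm_zero, tsum_zero] at hnorm
    norm_num at hnorm
  -- tsum of α i * (forced value) is 1, for any γ matching forced values on nonzeros
  have htsum1 : ∀ γ : ℕ → ℂ, (∀ i, α i ≠ 0 → γ i = conj (α i) / (‖α i‖ : ℂ)) →
      ∑' i, α i * γ i = 1 := by
    intro γ hγ
    have : ∀ i, α i * γ i = ((‖α i‖ : ℝ) : ℂ) := by
      intro i
      by_cases hi : α i = 0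
      · simp [hi]
      · rw [hγ i hi, mul_unit_val hi]
    rw [tsum_congr this]
    calc ∑' i, ((‖α i‖ : ℝ) : ℂ) = (((∑' i, ‖α i‖ : ℝ)) : ℂ) :=
          (Complex.ofRealCLM.map_tsum hsum).symm
      _ = 1 := by rw [hnorm]; norm_num
  constructor
  · rintro ⟨γ, ⟨L, hL⟩, hsup, hle, htsum⟩
    -- equality analysis
    have hsumprod : Summable (fun i => α i * γ i) := by
      apply Summable.of_norm_bounded hsum
      intro i
      calc ‖α i * γ i‖ = ‖α i‖ * ‖γ i‖ := norm_mul _ _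
        _ ≤ ‖α i‖ * 1 := by gcongr; exact hle i
        _ = ‖α i‖ := mul_one _
    have hre_sum : Summable (fun i => (α i * γ i).re) :=
      ⟨_, Complex.hasSum_re hsumprod.hasSum⟩
    have hle_re : ∀ i, (α i * γ i).re ≤ ‖α i‖ := by
      intro i
      calc (α i * γ i).re ≤ ‖α i * γ i‖ := Complex.re_le_norm _
        _ = ‖α i‖ * ‖γ i‖ := norm_mul _ _
        _ ≤ ‖α i‖ * 1 := by gcongr; exact hle i
        _ = ‖α i‖ := mul_one _
    have heq : ∑' i, (α i * γ i).re = ∑' i, ‖α i‖ := by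
      rw [← Complex.re_tsum hsumprod, htsum, hnorm]
      simp
    have hterm := tsum_eq_forall hre_sum hsum hle_re heq
    have key : ∀ i, α i ≠ 0 → γ i = conj (α i) / (‖α i‖ : ℂ) := by
      intro i hi
      have hn : ‖α i * γ i‖ = (α i * γ i).re := by
        have h1 : ‖α i * γ i‖ ≤ ‖α i‖ := by
          calc ‖α i * γ i‖ = ‖α i‖ * ‖γ i‖ := norm_mul _ _
            _ ≤ ‖α i‖ * 1 := by gcongr; exact hle i
            _ = ‖α i‖ := mul_one _
        have h2 := Complex.re_le_norm (α i * γ i)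
        rw [hterm i] at h2 ⊢
        linarith
      have hz : α i * γ i = ((‖α i‖ : ℝ) : ℂ) := by
        have := re_eq_norm_imp hn.symm
        rw [this, hn, hterm i]
      have h0 : (‖α i‖ : ℂ) ≠ 0 := by simpa using norm_ne_zero_iff.mpr hi
      exact mul_left_cancel₀ hi (hz.trans (mul_unit_val hi).symm)
    by_cases hfin : ({i : ℕ | α i = 0}ᶜ).Finite
    · exact Or.inl hfin
    · right
      refine ⟨L, ?_⟩
      have hinf : (setOf (fun i => α i ≠ 0)).Infinite := by
        rw [← hcompl]; exact hfin
      have hm : StrictMono (Nat.nth (fun i => α i ≠ 0)) := Nat.nth_strictMono hinf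
      have := hL.comp hm.tendsto_atTop
      refine this.congr fun k => ?_
      exact key _ (Nat.nth_mem_of_infinite hinf k)
  · rintro h
    have hsup_eq : ∀ γ : ℕ → ℂ, (∀ i, ‖γ i‖ ≤ 1) → (∃ i, ‖γ i‖ = 1) →
        (⨆ i, ‖γ i‖) = 1 := by
      rintro γ hle ⟨i0, hi0⟩
      apply le_antisymm (ciSup_le hle)
      rw [← hi0]
      have hbdd : BddAbove (Set.range fun i => ‖γ i‖) := ⟨1, by rintro x ⟨i, rfl⟩; exact hle i⟩
      exact le_ciSup hbdd i0
    obtain ⟨i0, hi0⟩ := hex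
    by_cases hfin : ({i : ℕ | α i = 0}ᶜ).Finite
    · -- finite case: fill zeros with 1
      set γ : ℕ → ℂ := fun i => if α i = 0 then 1 else conj (α i) / (‖α i‖ : ℂ) with hγdef
      have hγ : ∀ i, α i ≠ 0 → γ i = conj (α i) / (‖α i‖ : ℂ) := by
        intro i hi; simp [hγdef, hi]
      have hle : ∀ i, ‖γ i‖ ≤ 1 := by
        intro i
        by_cases hi : α i = 0
        · simp [hγdef, hi]
        · rw [hγ i hi, unit_val hi]
      refine ⟨γ, ⟨1, ?_⟩, hsup_eq γ hle ⟨i0, by rw [hγ i0 hi0, unit_val hi0]⟩, hle,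
        htsum1 γ hγ⟩
      obtain ⟨N, hN⟩ := hfin.bddAbove
      have hev : (fun _ : ℕ => (1 : ℂ)) =ᶠ[atTop] γ := by
        rw [Filter.EventuallyEq, eventually_atTop]
        refine ⟨N + 1, fun i hi => ?_⟩
        have hz : α i = 0 := by
          by_contra hne
          exact absurd (hN (by simpa [Set.mem_compl_iff] using hne)) (by omega)
        simp [hγdef, hz]
      exact tendsto_const_nhds.congr' hev
    · -- infinite case
      have hinf : (setOf (fun i => α i ≠ 0)).Infinite := by
        rw [← hcompl]; exact hfin
      obtain ⟨L, hL⟩ := h.resolve_left hfin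
      have hunit : ∀ k, ‖conj (α (Nat.nth (fun i => α i ≠ 0) k)) /
          (‖α (Nat.nth (fun i => α i ≠ 0) k)‖ : ℂ)‖ = 1 := fun k =>
        unit_val (Nat.nth_mem_of_infinite hinf k)
      have hLnorm : ‖L‖ = 1 := by
        have h1 := hL.norm
        have h2 : Tendsto (fun _ : ℕ => (1 : ℝ)) atTop (𝓝 ‖L‖) :=
          h1.congr fun k => hunit k
        exact tendsto_nhds_unique h2 tendsto_const_nhds
      set γ : ℕ → ℂ := fun i => if α i = 0 then L else conj (α i) / (‖α i‖ : ℂ) with hγdef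
      have hγ : ∀ i, α i ≠ 0 → γ i = conj (α i) / (‖α i‖ : ℂ) := by
        intro i hi; simp [hγdef, hi]
      have hle : ∀ i, ‖γ i‖ ≤ 1 := by
        intro i
        by_cases hi : α i = 0
        · simp [hγdef, hi, hLnorm]
        · rw [hγ i hi, unit_val hi]
      refine ⟨γ, ⟨L, ?_⟩, hsup_eq γ hle ⟨i0, by rw [hγ i0 hi0, unit_val hi0]⟩, hle,
        htsum1 γ hγ⟩
      rw [tendsto_atTop'] at hL ⊢
      intro s hs
      obtain ⟨K, hK⟩ := hL s hs
      refine ⟨Nat.nth (fun i => α i ≠ 0) K, fun b hb => ?_⟩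
      by_cases hbz : α b = 0
      · simpa [hγdef, hbz] using mem_of_mem_nhds hs
      · have hcount : K ≤ Nat.count (fun i => α i ≠ 0) b := by
          have := Nat.count_monotone (fun i => α i ≠ 0) hb
          rwa [Nat.count_nth_of_infinite hinf] at this
        have hnth : Nat.nth (fun i => α i ≠ 0) (Nat.count (fun i => α i ≠ 0) b) = b :=
          Nat.nth_count hbz
        have := hK _ hcount
        rw [hnth] at this
        simpa [hγdef, hbz] using this
end

section
/- Let X be a Banach space and x* an element of the unit sphere of X*. Then x* is a w*-w point of continuity of the unit ball of X* (i.e., the identity map from (X*_1, weak*) to (X*_1, weak) is continuous at x*) if and only if x* has a unique norm-preserving extension from X to X**, that is, the canonical image J_{X*}(x*) ∈ X*** is the unique functional Λ on X** with Λ restricted to (the canonical image of) X equal to x* and ‖Λ‖ = 1. -/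
open NormedSpace Filter Topology
open Metric

namespace NormedSpace

/-- The topological dual of a seminormed space `E` (as `NormedSpace.Dual` was in the older Mathlib). -/
abbrev Dual (𝕜 : Type*) [NontriviallyNormedField 𝕜] (E : Type*) [SeminormedAddCommGroup E]
    [NormedSpace 𝕜 E] : Type _ := E →L[𝕜] 𝕜

end NormedSpace

/-- Approximate Goldstine: any `Λ` in the unit ball of `M**` can be approximated on finitely
many functionals by elements of the unit ball of `M`. -/
theorem goldstine_approx {M : Type*} [NormedAddCommGroup M] [NormedSpace ℝ M]
    (Λ : Dual ℝ (Dual ℝ M)) (hΛ : ‖Λ‖ ≤ 1) (T : Finset (Dual ℝ M)) {ε : ℝ} (hε : 0 < ε) :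
    ∃ φ : M, ‖φ‖ ≤ 1 ∧ ∀ F ∈ T, |F φ - Λ F| < ε := by
  classical
  set ι := {F // F ∈ T}
  set Tm : M →L[ℝ] (ι → ℝ) := ContinuousLinearMap.pi (fun i => (i : Dual ℝ M)) with hTm
  set c : ι → ℝ := fun i => Λ i with hc
  have hmem : c ∈ closure (Tm '' closedBall (0 : M) 1) := by
    by_contra hcon
    have hconv : Convex ℝ (closure (Tm '' closedBall (0 : M) 1)) :=
      ((convex_closedBall (0 : M) 1).linear_image (Tm : M →ₗ[ℝ] (ι → ℝ))).closure
    obtain ⟨f, u, hfu, huc⟩ := geometric_hahn_banach_closed_point hconv isClosed_closure hcon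
    -- the functional `g = f ∘ Tm` on `M`
    set g : Dual ℝ M := ∑ i : ι, f (Pi.single i 1) • (i : Dual ℝ M) with hg
    have hgval : ∀ φ : M, g φ = f (Tm φ) := by
      intro φ
      have h1 : Tm φ = ∑ i : ι, (Tm φ i) • (Pi.single (M := fun _ => ℝ) i 1) := by
        ext j
        simp [Finset.sum_apply, Pi.single_apply, Finset.sum_ite_eq', Finset.sum_ite_eq]
        rw [Finset.sum_eq_single j (fun b _ hb => by simp [Ne.symm hb]) (by simp)]
        simp
      rw [hg]
      rw [ContinuousLinearMap.sum_apply]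
      conv_rhs => rw [h1]
      rw [map_sum]
      refine Finset.sum_congr rfl fun i _ => ?_
      simp only [ContinuousLinearMap.smul_apply, map_smul, smul_eq_mul, hTm,
        ContinuousLinearMap.pi_apply]
      ring
    have hballlt : ∀ φ ∈ closedBall (0 : M) 1, g φ < u := by
      intro φ hφ
      rw [hgval]
      exact hfu _ (subset_closure ⟨φ, hφ, rfl⟩)
    have hu0 : 0 < u := by
      have := hballlt 0 (by simp)
      simpa using this
    have hgle : ‖g‖ ≤ u := by
      refine ContinuousLinearMap.opNorm_le_bound g hu0.le fun φ => ?_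
      rcases eq_or_ne φ 0 with rfl | hφ0
      · simp [mul_nonneg hu0.le]
      · have hφpos : (0:ℝ) < ‖φ‖ := norm_pos_iff.mpr hφ0
        have h1 : ‖(‖φ‖)⁻¹ • φ‖ ≤ 1 := by
          rw [norm_smul, norm_inv, norm_norm]
          rw [inv_mul_cancel₀ hφpos.ne']
        have h2 : g ((‖φ‖)⁻¹ • φ) < u := hballlt _ (by simpa [dist_eq_norm] using h1)
        have h3 : g (-((‖φ‖)⁻¹ • φ)) < u := hballlt _ (by simpa [dist_eq_norm, norm_neg] using h1)
        have h4 : |g ((‖φ‖)⁻¹ • φ)| ≤ u := by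
          rw [abs_le]
          constructor
          · nlinarith [h3, map_neg g ((‖φ‖)⁻¹ • φ)]
          · exact h2.le
        have h4' : ‖φ‖⁻¹ * |g φ| ≤ u := by
          rwa [map_smul, smul_eq_mul, abs_mul, abs_inv, abs_norm] at h4
        have h5 := mul_le_mul_of_nonneg_left h4' hφpos.le
        rw [← mul_assoc, mul_inv_cancel₀ hφpos.ne', one_mul] at h5
        simpa [mul_comm] using h5
    have hfc : f c = Λ g := by
      have h1 : c = ∑ i : ι, (Λ i) • (Pi.single (M := fun _ => ℝ) i 1) := by
        ext j
        simp [hc, Finset.sum_apply, Pi.single_apply, Finset.sum_ite_eq', Finset.sum_ite_eq]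
        rw [Finset.sum_eq_single j (fun b _ hb => by simp [Ne.symm hb]) (by simp)]
        simp
      rw [h1, map_sum, hg, map_sum]
      refine Finset.sum_congr rfl fun i _ => ?_
      simp only [map_smul, smul_eq_mul]
      ring
    have : Λ g ≤ u := by
      calc Λ g ≤ ‖Λ‖ * ‖g‖ := le_trans (le_abs_self _) (Λ.le_opNorm g)
        _ ≤ 1 * u := by
            apply mul_le_mul hΛ hgle (norm_nonneg _) zero_le_one
        _ = u := one_mul u
    rw [hfc] at huc
    linarith
  rw [Metric.mem_closure_iff] at hmem
  obtain ⟨b, ⟨φ, hφ1, hφ2⟩, hb⟩ := hmem ε hε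
  refine ⟨φ, by simpa [dist_eq_norm] using hφ1, fun F hF => ?_⟩
  have := hb
  rw [dist_pi_lt_iff hε] at this
  have h := this ⟨F, hF⟩
  rw [← hφ2] at h
  have : dist (Λ F) (F φ) < ε := by simpa [hc, Tm, Real.dist_eq] using h
  rw [Real.dist_eq, abs_sub_comm] at this
  exact this


/-- `x*` in the dual unit ball is a *w\*-w point of continuity*: every net (filter) in the
dual unit ball converging weak\* to `x*` converges weakly to `x*`. -/
def IsWStarWPC {E : Type*} [NormedAddCommGroup E] [NormedSpace ℝ E]
    (x : Dual ℝ E) : Prop :=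
  ∀ l : Filter (Dual ℝ E), l.NeBot → (∀ᶠ φ in l, ‖φ‖ ≤ 1) →
    (∀ v : E, Tendsto (fun φ : Dual ℝ E => φ v) l (𝓝 (x v))) →
    ∀ Λ : Dual ℝ (Dual ℝ E), Tendsto (fun φ : Dual ℝ E => Λ φ) l (𝓝 (Λ x))

/-- **Unique extension characterization of w\*-w PCs.**  For `x* ∈ S(X*)`, `x*` is a w\*-w
point of continuity of the dual unit ball iff `x*` has a unique norm-preserving extension
from `X` to `X**`, i.e. there is exactly one norm-one functional `Λ` on `X**` whose
restriction to (the canonical image of) `X` is `x*` (namely `J_{X*}(x*)`). -/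
theorem isWStarWPC_iff_unique_norm_preserving_extension
    {X : Type*} [NormedAddCommGroup X] [NormedSpace ℝ X] [CompleteSpace X]
    (x : Dual ℝ X) (hx : ‖x‖ = 1) :
    IsWStarWPC x ↔
      (∃! Λ : Dual ℝ (Dual ℝ (Dual ℝ X)),
        (∀ v : X, Λ (inclusionInDoubleDual ℝ X v) = x v) ∧ ‖Λ‖ = 1) ∧
      ∀ Λ : Dual ℝ (Dual ℝ (Dual ℝ X)),
        (∀ v : X, Λ (inclusionInDoubleDual ℝ X v) = x v) → ‖Λ‖ = 1 →
          Λ = inclusionInDoubleDual ℝ (Dual ℝ X) x := by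
  classical
  have hJnorm : ‖inclusionInDoubleDual ℝ (Dual ℝ X) x‖ = ‖x‖ :=
    (inclusionInDoubleDualLi ℝ (E := Dual ℝ X)).norm_map x
  have hJext : ∀ v : X,
      inclusionInDoubleDual ℝ (Dual ℝ X) x (inclusionInDoubleDual ℝ X v) = x v := fun v => rfl
  constructor
  · intro hPC
    have main : ∀ Λ : Dual ℝ (Dual ℝ (Dual ℝ X)),
        (∀ v : X, Λ (inclusionInDoubleDual ℝ X v) = x v) → ‖Λ‖ = 1 →
          Λ = inclusionInDoubleDual ℝ (Dual ℝ X) x := by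
      intro Λ hext hnorm
      -- Build a filter from Goldstine neighborhoods
      set ι := Finset (Dual ℝ (Dual ℝ X)) × {ε : ℝ // 0 < ε} with hι
      have : Nonempty ι := ⟨⟨∅, ⟨1, one_pos⟩⟩⟩
      set A : ι → Set (Dual ℝ X) :=
        fun p => {φ | ‖φ‖ ≤ 1 ∧ ∀ F ∈ p.1, |F φ - Λ F| < (p.2 : ℝ)} with hA
      have hAne : ∀ p, (A p).Nonempty := by
        intro p
        obtain ⟨φ, h1, h2⟩ := goldstine_approx Λ (le_of_eq hnorm) p.1 p.2.2
        exact ⟨φ, h1, h2⟩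
      set l : Filter (Dual ℝ X) := ⨅ p, Filter.principal (A p) with hl
      have hdir : Directed (· ≥ ·) (fun p => Filter.principal (A p)) := by
        intro p q
        refine ⟨⟨p.1 ∪ q.1, ⟨min (p.2 : ℝ) (q.2 : ℝ), lt_min p.2.2 q.2.2⟩⟩, ?_, ?_⟩ <;>
          · simp only [ge_iff_le, Filter.principal_mono]
            rintro φ ⟨h1, h2⟩
            refine ⟨h1, fun F hF => ?_⟩
            refine lt_of_lt_of_le (h2 F (by simp [Finset.mem_union, hF])) ?_
            simp [min_le_left, min_le_right]
      have hne : l.NeBot := Filter.iInf_neBot_of_directed hdir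
        (fun p => Filter.principal_neBot_iff.mpr (hAne p))
      have hmem : ∀ p, A p ∈ l := fun p => Filter.mem_iInf_of_mem p (Filter.mem_principal_self _)
      have hball : ∀ᶠ φ in l, ‖φ‖ ≤ 1 := by
        filter_upwards [hmem ⟨∅, ⟨1, one_pos⟩⟩] with φ hφ using hφ.1
      have key : ∀ F : Dual ℝ (Dual ℝ X),
          Filter.Tendsto (fun φ : Dual ℝ X => F φ) l (nhds (Λ F)) := by
        intro F
        rw [Metric.tendsto_nhds]
        intro ε hε
        filter_upwards [hmem ⟨{F}, ⟨ε, hε⟩⟩] with φ hφ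
        rw [Real.dist_eq]
        exact hφ.2 F (Finset.mem_singleton_self F)
      have hwstar : ∀ v : X, Filter.Tendsto (fun φ : Dual ℝ X => φ v) l (nhds (x v)) := by
        intro v
        have := key (inclusionInDoubleDual ℝ X v)
        simpa [hext v] using this
      have hconc := hPC l hne hball hwstar
      ext F
      exact tendsto_nhds_unique (key F) (hconc F)
    refine ⟨⟨inclusionInDoubleDual ℝ (Dual ℝ X) x, ⟨hJext, by rw [hJnorm, hx]⟩, ?_⟩, main⟩
    rintro Λ ⟨h1, h2⟩
    exact main Λ h1 h2
  · rintro ⟨-, h2⟩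
    intro l hne hball hwstar Λ₀
    rw [tendsto_iff_ultrafilter]
    intro u hu
    haveI : (↑u : Filter (Dual ℝ X)).NeBot := u.neBot
    set g : Dual ℝ X → WeakDual ℝ (Dual ℝ (Dual ℝ X)) :=
      fun φ => StrongDual.toWeakDual (inclusionInDoubleDual ℝ (Dual ℝ X) φ) with hg
    set K : Set (WeakDual ℝ (Dual ℝ (Dual ℝ X))) :=
      WeakDual.toStrongDual ⁻¹' closedBall (0 : Dual ℝ (Dual ℝ (Dual ℝ X))) 1 with hK
    have hKcpt : IsCompact K := WeakDual.isCompact_closedBall 0 1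
    have hmemK : K ∈ Ultrafilter.map g u := by
      have hev : ∀ᶠ φ in (↑u : Filter (Dual ℝ X)), ‖φ‖ ≤ 1 := hu hball
      refine Filter.mem_map.mpr (hev.mono fun φ hφ => ?_)
      simp only [hK, Set.mem_preimage]
      refine (mem_closedBall_zero_iff (E := Dual ℝ (Dual ℝ (Dual ℝ X)))).mpr ?_
      calc ‖WeakDual.toStrongDual (g φ)‖
          = ‖inclusionInDoubleDual ℝ (Dual ℝ X) φ‖ := rfl
        _ = ‖φ‖ := (inclusionInDoubleDualLi ℝ (E := Dual ℝ X)).norm_map φ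
        _ ≤ 1 := hφ
    obtain ⟨Λw, hΛwK, hle⟩ := hKcpt.ultrafilter_le_nhds (Ultrafilter.map g u)
      (Filter.le_principal_iff.mpr hmemK)
    set Λ : Dual ℝ (Dual ℝ (Dual ℝ X)) := WeakDual.toStrongDual Λw with hΛ
    have hgt : Filter.Tendsto g (↑u) (nhds Λw) := hle
    have heval : ∀ F : Dual ℝ (Dual ℝ X),
        Filter.Tendsto (fun φ : Dual ℝ X => F φ) (↑u) (nhds (Λ F)) := by
      intro F
      exact ((WeakDual.eval_continuous F).tendsto Λw).comp hgt
    have hΛle : ‖Λ‖ ≤ 1 := by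
      have := hΛwK
      exact mem_closedBall_zero_iff.mp this
    have hΛext : ∀ v : X, Λ (inclusionInDoubleDual ℝ X v) = x v := by
      intro v
      have h1 := heval (inclusionInDoubleDual ℝ X v)
      have hlim : Filter.Tendsto (fun φ : Dual ℝ X => φ v) (↑u) (nhds (x v)) :=
        (hwstar v).mono_left hu
      exact tendsto_nhds_unique (by simpa using h1) hlim
    have hΛge : 1 ≤ ‖Λ‖ := by
      rw [← hx]
      refine ContinuousLinearMap.opNorm_le_bound x (norm_nonneg Λ) fun v => ?_
      calc ‖x v‖ = ‖Λ (inclusionInDoubleDual ℝ X v)‖ := by rw [hΛext v]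
        _ ≤ ‖Λ‖ * ‖inclusionInDoubleDual ℝ X v‖ := Λ.le_opNorm _
        _ ≤ ‖Λ‖ * ‖v‖ :=
            mul_le_mul_of_nonneg_left (double_dual_bound ℝ X v) (norm_nonneg Λ)
    have hΛeq : Λ = inclusionInDoubleDual ℝ (Dual ℝ X) x :=
      h2 Λ hΛext (le_antisymm hΛle hΛge)
    have hfin := heval Λ₀
    have hval : Λ Λ₀ = Λ₀ x := by rw [hΛeq]; rfl
    rwa [hval] at hfin
end

section
/- Let S be a nonempty set (viewed as a discrete topological space) and X a Banach space. Then c_0(S, X) is an M-ideal in ℓ^∞(S, X). -/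
open NormedSpace

section Helpers

variable {S : Type*} [Nonempty S] [DecidableEq S]
variable {X : Type*} [NormedAddCommGroup X] [NormedSpace ℝ X]

local notation "Z" => lp (fun _ : S => X) ⊤

theorem MI.single_apply' (s : S) (x : X) (t : S) :
    (lp.single (E := fun _ : S => X) ⊤ s x) t = if t = s then x else 0 := by
  rw [lp.single_apply]
  split <;> simp_all [eq_rec_constant]

theorem MI.norm_single_le (s : S) (x : X) :
    ‖lp.single (E := fun _ : S => X) ⊤ s x‖ ≤ ‖x‖ := by
  refine lp.norm_le_of_forall_le' ‖x‖ fun t => ?_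
  rw [MI.single_apply']
  split <;> simp [norm_nonneg]

/-- Coordinate embedding `X →L ℓ^∞(S,X)`. -/
noncomputable def MI.sgl (s : S) : X →L[ℝ] (lp (fun _ : S => X) ⊤) :=
  LinearMap.mkContinuous
    { toFun := fun x => lp.single ⊤ s x
      map_add' := fun x y => by
        apply lp.ext; funext t
        simp only [lp.coeFn_add, Pi.add_apply, MI.single_apply']
        split <;> simp
      map_smul' := fun c x => by
        apply lp.ext; funext t
        simp only [lp.coeFn_smul, Pi.smul_apply, MI.single_apply', RingHom.id_apply]
        split <;> simp }
    1 (fun x => by simpa using MI.norm_single_le s x)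

@[simp] theorem MI.sgl_apply (s : S) (x : X) (t : S) :
    (MI.sgl s x : Z) t = if t = s then x else 0 := MI.single_apply' s x t

end Helpers

section Main

variable {S : Type*} [Nonempty S] [DecidableEq S]
variable {X : Type*} [NormedAddCommGroup X] [NormedSpace ℝ X]

local notation "Z" => lp (fun _ : S => X) ⊤

set_option linter.unusedSectionVars false

/-- Coordinate functionals of `F`. -/
noncomputable def MI.coord (F : StrongDual ℝ Z) (s : S) : X →L[ℝ] ℝ := F.comp (MI.sgl s)

theorem MI.coord_apply (F : StrongDual ℝ Z) (s : S) (x : X) :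
    MI.coord F s x = F (MI.sgl s x) := rfl

/-- Coordinates of a finite sum of singles. -/
theorem MI.sum_sgl_apply (T : Finset S) (v : S → X) (t : S) :
    ((∑ s ∈ T, MI.sgl s (v s) : Z) : ∀ _ : S, X) t = if t ∈ T then v t else 0 := by
  rw [lp.coeFn_sum]
  simp only [Finset.sum_apply, MI.sgl_apply]
  exact Finset.sum_ite_eq T t v

theorem MI.norm_sum_sgl_le (T : Finset S) (v : S → X) (C : ℝ) (hv : ∀ s, ‖v s‖ ≤ C)
    (hC : 0 ≤ C) : ‖(∑ s ∈ T, MI.sgl s (v s) : Z)‖ ≤ C := by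
  refine lp.norm_le_of_forall_le' C fun t => ?_
  rw [MI.sum_sgl_apply]
  split
  · exact hv t
  · simpa using hC

/-- Near-attainment of the operator norm of a real functional. -/
theorem MI.exists_near {Y : Type*} [NormedAddCommGroup Y] [NormedSpace ℝ Y]
    (G : Y →L[ℝ] ℝ) {δ : ℝ} (hδ : 0 < δ) : ∃ y : Y, ‖y‖ ≤ 1 ∧ ‖G‖ - δ ≤ G y := by
  rcases le_or_gt ‖G‖ δ with h | h
  · exact ⟨0, by simp, by simpa using h⟩
  · obtain ⟨y, hy1, hy2⟩ := G.exists_lt_apply_of_lt_opNorm (r := ‖G‖ - δ) (by linarith)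
    rcases le_or_gt 0 (G y) with h0 | h0
    · exact ⟨y, hy1.le, by rw [Real.norm_eq_abs, abs_of_nonneg h0] at hy2; linarith⟩
    · refine ⟨-y, by simpa using hy1.le, ?_⟩
      rw [map_neg]
      rw [Real.norm_eq_abs, abs_of_neg h0] at hy2
      linarith

/-- Any finite sum of coordinate norms is bounded by `‖F‖`. -/
theorem MI.sum_coord_norm_le (F : StrongDual ℝ Z) (T : Finset S) :
    ∑ s ∈ T, ‖MI.coord F s‖ ≤ ‖F‖ := by
  by_contra hcon
  push_neg at hcon
  set ε : ℝ := (∑ s ∈ T, ‖MI.coord F s‖ - ‖F‖) / 2 with hε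
  have hε0 : 0 < ε := by rw [hε]; linarith
  set δ : ℝ := ε / (T.card + 1) with hδ
  have hδ0 : 0 < δ := by positivity
  choose x hx1 hx2 using fun s : S => MI.exists_near (MI.coord F s) hδ0
  set f : Z := ∑ s ∈ T, MI.sgl s (x s) with hf
  have hfn : ‖f‖ ≤ 1 := MI.norm_sum_sgl_le T x 1 hx1 zero_le_one
  have hFf : F f = ∑ s ∈ T, MI.coord F s (x s) := by
    rw [hf, map_sum]; rfl
  have h1 : ∑ s ∈ T, ‖MI.coord F s‖ - T.card * δ ≤ F f := by
    rw [hFf]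
    have := Finset.sum_le_sum (fun s (_ : s ∈ T) => hx2 s)
    rw [Finset.sum_sub_distrib, Finset.sum_const, nsmul_eq_mul] at this
    linarith
  have h2 : F f ≤ ‖F‖ := by
    calc F f ≤ ‖F‖ * ‖f‖ := by
          have := F.le_opNorm f
          exact (le_abs_self _).trans (by simpa [Real.norm_eq_abs] using this)
      _ ≤ ‖F‖ * 1 := by
          exact mul_le_mul_of_nonneg_left hfn (norm_nonneg F)
      _ = ‖F‖ := mul_one _
  have h3 : (T.card : ℝ) * δ ≤ ε := by
    rw [hδ, mul_div_assoc']
    rw [div_le_iff₀ (by positivity)]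
    nlinarith [hε0]
  have : ∑ s ∈ T, ‖MI.coord F s‖ ≤ ‖F‖ + ε := by linarith
  rw [hε] at this
  linarith

theorem MI.summable_coord_norm (F : StrongDual ℝ Z) : Summable fun s : S => ‖MI.coord F s‖ :=
  summable_of_sum_le (fun _ => norm_nonneg _) (MI.sum_coord_norm_le F)

theorem MI.tsum_coord_norm_le (F : StrongDual ℝ Z) : ∑' s : S, ‖MI.coord F s‖ ≤ ‖F‖ :=
  Summable.tsum_le_of_sum_le (MI.summable_coord_norm F) (MI.sum_coord_norm_le F)

theorem MI.summable_eval (F : StrongDual ℝ Z) (g : Z) :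
    Summable fun s : S => MI.coord F s (g s) := by
  refine Summable.of_norm ?_
  refine Summable.of_nonneg_of_le (fun s => norm_nonneg _)
    (fun s => ?_) ((MI.summable_coord_norm F).mul_right ‖g‖)
  calc ‖MI.coord F s (g s)‖ ≤ ‖MI.coord F s‖ * ‖g s‖ := (MI.coord F s).le_opNorm _
    _ ≤ ‖MI.coord F s‖ * ‖g‖ :=
        mul_le_mul_of_nonneg_left (lp.norm_apply_le_norm ENNReal.top_ne_zero g s) (norm_nonneg _)

theorem MI.eval_bound (F : StrongDual ℝ Z) (g : Z) :
    ‖∑' s : S, MI.coord F s (g s)‖ ≤ ‖F‖ * ‖g‖ := by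
  calc ‖∑' s : S, MI.coord F s (g s)‖ ≤ ∑' s : S, ‖MI.coord F s (g s)‖ :=
        norm_tsum_le_tsum_norm ((MI.summable_eval F g).norm)
    _ ≤ ∑' s : S, ‖MI.coord F s‖ * ‖g‖ := by
        refine Summable.tsum_le_tsum (fun s => ?_) ((MI.summable_eval F g).norm)
          ((MI.summable_coord_norm F).mul_right ‖g‖)
        calc ‖MI.coord F s (g s)‖ ≤ ‖MI.coord F s‖ * ‖g s‖ := (MI.coord F s).le_opNorm _
          _ ≤ ‖MI.coord F s‖ * ‖g‖ :=
              mul_le_mul_of_nonneg_left (lp.norm_apply_le_norm ENNReal.top_ne_zero g s)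
                (norm_nonneg _)
    _ = (∑' s : S, ‖MI.coord F s‖) * ‖g‖ := tsum_mul_right
    _ ≤ ‖F‖ * ‖g‖ := mul_le_mul_of_nonneg_right (MI.tsum_coord_norm_le F) (norm_nonneg _)

/-- The candidate projection, as a map on functionals. -/
noncomputable def MI.Pfun (F : StrongDual ℝ Z) : StrongDual ℝ Z :=
  LinearMap.mkContinuous
    { toFun := fun g => ∑' s : S, MI.coord F s (g s)
      map_add' := fun g h => by
        simp only [lp.coeFn_add, Pi.add_apply, map_add]
        exact Summable.tsum_add (MI.summable_eval F g) (MI.summable_eval F h)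
      map_smul' := fun c g => by
        simp only [lp.coeFn_smul, Pi.smul_apply, map_smul, RingHom.id_apply, smul_eq_mul]
        exact tsum_mul_left }
    ‖F‖ (fun g => MI.eval_bound F g)

theorem MI.Pfun_apply (F : StrongDual ℝ Z) (g : Z) :
    MI.Pfun F g = ∑' s : S, MI.coord F s (g s) := rfl

theorem MI.Pfun_norm_le (F : StrongDual ℝ Z) : ‖MI.Pfun F‖ ≤ ‖F‖ :=
  LinearMap.mkContinuous_norm_le _ (norm_nonneg F) _

/-- The projection `P` on the dual of `ℓ^∞(S, X)`. -/
noncomputable def MI.P : StrongDual ℝ Z →L[ℝ] StrongDual ℝ Z :=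
  LinearMap.mkContinuous
    { toFun := MI.Pfun
      map_add' := fun F G => by
        apply ContinuousLinearMap.ext; intro g
        simp only [MI.Pfun_apply, ContinuousLinearMap.add_apply]
        have hc : ∀ s : S, MI.coord (F + G) s (g s) = MI.coord F s (g s) + MI.coord G s (g s) :=
          fun s => rfl
        simp only [hc]
        exact Summable.tsum_add (MI.summable_eval F g) (MI.summable_eval G g)
      map_smul' := fun c F => by
        apply ContinuousLinearMap.ext; intro g
        simp only [MI.Pfun_apply, RingHom.id_apply, ContinuousLinearMap.smul_apply, smul_eq_mul]
        have hc : ∀ s : S, MI.coord (c • F) s (g s) = c * MI.coord F s (g s) := fun s => rfl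
        simp only [hc]
        exact tsum_mul_left }
    1 (fun F => by simpa using MI.Pfun_norm_le F)

theorem MI.P_apply (F : StrongDual ℝ Z) : MI.P F = MI.Pfun F := rfl

theorem MI.Pfun_sgl (F : StrongDual ℝ Z) (s : S) (x : X) :
    MI.Pfun F (MI.sgl s x) = MI.coord F s x := by
  rw [MI.Pfun_apply]
  refine tsum_eq_single s (fun t ht => ?_) |>.trans ?_
  · rw [MI.sgl_apply, if_neg ht, map_zero]
  · rw [MI.sgl_apply, if_pos rfl]

theorem MI.coord_Pfun (F : StrongDual ℝ Z) (s : S) : MI.coord (MI.Pfun F) s = MI.coord F s := by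
  apply ContinuousLinearMap.ext; intro x
  exact MI.Pfun_sgl F s x

theorem MI.Pfun_idem (F : StrongDual ℝ Z) : MI.Pfun (MI.Pfun F) = MI.Pfun F := by
  apply ContinuousLinearMap.ext; intro g
  simp only [MI.Pfun_apply, MI.coord_Pfun]

theorem MI.Pfun_sum_sgl (F : StrongDual ℝ Z) (T : Finset S) (v : S → X) :
    MI.Pfun F (∑ s ∈ T, MI.sgl s (v s)) = ∑ s ∈ T, MI.coord F s (v s) := by
  rw [map_sum]
  exact Finset.sum_congr rfl (fun s _ => MI.Pfun_sgl F s (v s))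

theorem MI.F_sum_sgl (F : StrongDual ℝ Z) (T : Finset S) (v : S → X) :
    F (∑ s ∈ T, MI.sgl s (v s)) = ∑ s ∈ T, MI.coord F s (v s) := by
  rw [map_sum]; rfl

/-- Tail bound: if `g` vanishes on `T`, then `|Pfun F g|` is controlled by the tail sums. -/
theorem MI.Pfun_tail (F : StrongDual ℝ Z) (T : Finset S) (g : Z) (hg : ∀ s ∈ T, (g : ∀ _ : S, X) s = 0) :
    ‖MI.Pfun F g‖ ≤ ((∑' s : S, ‖MI.coord F s‖) - ∑ s ∈ T, ‖MI.coord F s‖) * ‖g‖ := by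
  have hsum := MI.summable_coord_norm F
  have hb : Summable fun s : S => (if s ∈ T then (0:ℝ) else ‖MI.coord F s‖ * ‖g‖) := by
    refine Summable.of_nonneg_of_le (fun s => by split <;> positivity) (fun s => ?_)
      (hsum.mul_right ‖g‖)
    split
    · positivity
    · exact le_refl _
  calc ‖MI.Pfun F g‖ ≤ ∑' s : S, ‖MI.coord F s (g s)‖ := by
        rw [MI.Pfun_apply]
        exact norm_tsum_le_tsum_norm ((MI.summable_eval F g).norm)
    _ ≤ ∑' s : S, (if s ∈ T then (0:ℝ) else ‖MI.coord F s‖ * ‖g‖) := by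
        refine Summable.tsum_le_tsum (fun s => ?_) ((MI.summable_eval F g).norm) hb
        split
        · next h => simp [hg s h]
        · calc ‖MI.coord F s (g s)‖ ≤ ‖MI.coord F s‖ * ‖g s‖ := (MI.coord F s).le_opNorm _
            _ ≤ ‖MI.coord F s‖ * ‖g‖ :=
                mul_le_mul_of_nonneg_left (lp.norm_apply_le_norm ENNReal.top_ne_zero g s)
                  (norm_nonneg _)
    _ = ((∑' s : S, ‖MI.coord F s‖) - ∑ s ∈ T, ‖MI.coord F s‖) * ‖g‖ := by
        have h1 : ∀ s : S, (if s ∈ T then (0:ℝ) else ‖MI.coord F s‖ * ‖g‖)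
            = ‖MI.coord F s‖ * ‖g‖ - (if s ∈ T then ‖MI.coord F s‖ * ‖g‖ else 0) := by
          intro s; split <;> ring
        have h2 : Summable fun s : S => (if s ∈ T then ‖MI.coord F s‖ * ‖g‖ else (0:ℝ)) :=
          summable_of_ne_finset_zero (s := T) (fun s hs => if_neg hs)
        have h3 : (∑' s : S, if s ∈ T then ‖MI.coord F s‖ * ‖g‖ else (0:ℝ))
            = ∑ s ∈ T, ‖MI.coord F s‖ * ‖g‖ := by
          rw [tsum_eq_sum (fun s hs => if_neg hs)]
          exact Finset.sum_congr rfl (fun s hs => if_pos hs)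
        simp only [h1]
        rw [Summable.tsum_sub (hsum.mul_right ‖g‖) h2, h3, tsum_mul_right, ← Finset.sum_mul, sub_mul]

theorem MI.sgl_c0 (s : S) (x : X) :
    ∀ ε : ℝ, 0 < ε → {t : S | ε ≤ ‖(MI.sgl s x : Z) t‖}.Finite := by
  intro ε hε
  refine (Set.finite_singleton s).subset ?_
  intro t ht
  simp only [Set.mem_setOf_eq, MI.sgl_apply] at ht
  rcases eq_or_ne t s with rfl | h
  · exact rfl
  · rw [if_neg h] at ht
    simp only [norm_zero] at ht
    exact absurd ht (not_le.mpr hε)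

theorem MI.Pfun_eq_zero_iff (F : StrongDual ℝ Z) :
    MI.Pfun F = 0 ↔ ∀ g : Z, (∀ ε : ℝ, 0 < ε → {s : S | ε ≤ ‖(g : ∀ _ : S, X) s‖}.Finite)
      → F g = 0 := by
  constructor
  · intro hP g hg
    -- all coordinate functionals vanish
    have hc : ∀ s : S, MI.coord F s = 0 := by
      intro s
      rw [← MI.coord_Pfun F s, hP]
      apply ContinuousLinearMap.ext; intro x
      simp [MI.coord_apply]
    have key : ∀ ε : ℝ, 0 < ε → ‖F g‖ ≤ ‖F‖ * ε := by
      intro ε hε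
      set T : Finset S := (hg ε hε).toFinset with hT
      set gT : Z := ∑ s ∈ T, MI.sgl s ((g : ∀ _ : S, X) s) with hgT
      have hFgT : F gT = 0 := by
        rw [hgT, MI.F_sum_sgl]
        exact Finset.sum_eq_zero (fun s _ => by rw [hc s]; rfl)
      have hsub : ‖g - gT‖ ≤ ε := by
        refine lp.norm_le_of_forall_le' ε fun t => ?_
        have : ((g - gT : Z) : ∀ _ : S, X) t
            = (g : ∀ _ : S, X) t - (if t ∈ T then (g : ∀ _ : S, X) t else 0) := by
          rw [lp.coeFn_sub, Pi.sub_apply, hgT, MI.sum_sgl_apply]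
        rw [this]
        by_cases ht : t ∈ T
        · rw [if_pos ht]; simpa using hε.le
        · rw [if_neg ht, sub_zero]
          rw [hT, Set.Finite.mem_toFinset] at ht
          simp only [Set.mem_setOf_eq, not_le] at ht
          exact ht.le
      calc ‖F g‖ = ‖F (g - gT)‖ := by rw [map_sub, hFgT, sub_zero]
        _ ≤ ‖F‖ * ‖g - gT‖ := F.le_opNorm _
        _ ≤ ‖F‖ * ε := mul_le_mul_of_nonneg_left hsub (norm_nonneg F)
    have h0 : ‖F g‖ ≤ 0 := by
      refine le_of_forall_pos_le_add fun c hc0 => ?_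
      have := key (c / (‖F‖ + 1)) (by positivity)
      have h2 : ‖F‖ * (c / (‖F‖ + 1)) ≤ c := by
        rw [mul_div_assoc', div_le_iff₀ (by positivity : (0:ℝ) < ‖F‖ + 1)]
        nlinarith [norm_nonneg F]
      linarith
    have := norm_nonneg (F g)
    have : ‖F g‖ = 0 := le_antisymm h0 this
    simpa using this
  · intro h
    apply ContinuousLinearMap.ext; intro g
    rw [MI.Pfun_apply]
    have : ∀ s : S, MI.coord F s ((g : ∀ _ : S, X) s) = 0 := by
      intro s
      rw [MI.coord_apply]
      exact h _ (MI.sgl_c0 s _)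
    simp [this]

theorem MI.Pfun_norm_le_tsum (F : StrongDual ℝ Z) : ‖MI.Pfun F‖ ≤ ∑' s : S, ‖MI.coord F s‖ := by
  refine ContinuousLinearMap.opNorm_le_bound _ (tsum_nonneg fun s => norm_nonneg _) fun g => ?_
  calc ‖MI.Pfun F g‖ ≤ ((∑' s : S, ‖MI.coord F s‖) - ∑ s ∈ (∅ : Finset S), ‖MI.coord F s‖) * ‖g‖ :=
        MI.Pfun_tail F ∅ g (fun s hs => absurd hs (Finset.notMem_empty s))
    _ = (∑' s : S, ‖MI.coord F s‖) * ‖g‖ := by simp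

theorem MI.norm_eq (F : StrongDual ℝ Z) : ‖F‖ = ‖MI.Pfun F‖ + ‖F - MI.Pfun F‖ := by
  refine le_antisymm ?_ ?_
  · calc ‖F‖ = ‖MI.Pfun F + (F - MI.Pfun F)‖ := by rw [add_sub_cancel]
      _ ≤ ‖MI.Pfun F‖ + ‖F - MI.Pfun F‖ := norm_add_le _ _
  · refine le_of_forall_pos_le_add fun ε hε => ?_
    set G : StrongDual ℝ Z := F - MI.Pfun F with hG
    set a : S → ℝ := fun s => ‖MI.coord F s‖ with ha
    set A : ℝ := ∑' s : S, a s with hA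
    have hsum : Summable a := MI.summable_coord_norm F
    set ε' : ℝ := ε / 5 with hε'
    have hε'0 : 0 < ε' := by positivity
    -- choose a finite set catching most of the mass
    obtain ⟨T, hT⟩ : ∃ T : Finset S, A - ε' ≤ ∑ s ∈ T, a s := by
      have htend := hsum.hasSum
      have hmem := htend (Metric.ball_mem_nhds A hε'0)
      obtain ⟨T, hT⟩ := Filter.mem_atTop_sets.mp hmem
      refine ⟨T, ?_⟩
      have := hT T le_rfl
      simp only [Set.mem_preimage, Metric.mem_ball, Real.dist_eq] at this
      have := abs_lt.mp this
      linarith [this.1]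
    have hTA : ∑ s ∈ T, a s ≤ A := Summable.sum_le_tsum T (fun s _ => norm_nonneg _) hsum
    -- choose near-norming vectors for the coordinates
    set δ : ℝ := ε' / (T.card + 1) with hδ
    have hδ0 : 0 < δ := by positivity
    choose x hx1 hx2 using fun s : S => MI.exists_near (MI.coord F s) hδ0
    set f : Z := ∑ s ∈ T, MI.sgl s (x s) with hf
    have hfn : ‖f‖ ≤ 1 := MI.norm_sum_sgl_le T x 1 hx1 zero_le_one
    have hcard : (T.card : ℝ) * δ ≤ ε' := by
      rw [hδ, mul_div_assoc', div_le_iff₀ (by positivity : (0:ℝ) < T.card + 1)]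
      nlinarith [hε'0, Nat.cast_nonneg (α := ℝ) T.card]
    have hPf : ‖MI.Pfun F‖ - 2 * ε' ≤ MI.Pfun F f := by
      have h1 : MI.Pfun F f = ∑ s ∈ T, MI.coord F s (x s) := by
        rw [hf]; exact MI.Pfun_sum_sgl F T x
      have h2 := Finset.sum_le_sum (fun s (_ : s ∈ T) => hx2 s)
      rw [Finset.sum_sub_distrib, Finset.sum_const, nsmul_eq_mul] at h2
      have h3 : ‖MI.Pfun F‖ ≤ A := MI.Pfun_norm_le_tsum F
      rw [h1]
      linarith
    -- choose a near-norming vector for G and kill its coordinates on T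
    obtain ⟨g, hg1, hg2⟩ := MI.exists_near G hε'0
    set gT : Z := ∑ s ∈ T, MI.sgl s ((g : ∀ _ : S, X) s) with hgT
    set g' : Z := g - gT with hg'
    have hg'coe : ∀ t : S, (g' : ∀ _ : S, X) t
        = if t ∈ T then 0 else (g : ∀ _ : S, X) t := by
      intro t
      rw [hg', lp.coeFn_sub, Pi.sub_apply, hgT, MI.sum_sgl_apply]
      split <;> simp
    have hg'T : ∀ s ∈ T, (g' : ∀ _ : S, X) s = 0 := fun s hs => by rw [hg'coe, if_pos hs]
    have hg'n : ‖g'‖ ≤ 1 := by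
      refine lp.norm_le_of_forall_le' 1 fun t => ?_
      rw [hg'coe]
      split
      · simp
      · exact (lp.norm_apply_le_norm ENNReal.top_ne_zero g t).trans hg1
    have hGgT : G gT = 0 := by
      rw [hG, ContinuousLinearMap.sub_apply, hgT, MI.F_sum_sgl, MI.Pfun_sum_sgl, sub_self]
    have hGg' : ‖G‖ - ε' ≤ G g' := by
      have : G g' = G g - G gT := by rw [hg', map_sub]
      rw [this, hGgT, sub_zero]
      exact hg2
    have hPg' : ‖MI.Pfun F g'‖ ≤ ε' := by
      have h1 := MI.Pfun_tail F T g' hg'T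
      have h2 : (A - ∑ s ∈ T, a s) * ‖g'‖ ≤ ε' * 1 := by
        refine mul_le_mul (by linarith) hg'n (norm_nonneg _) hε'0.le
      rw [← hA] at h1
      calc ‖MI.Pfun F g'‖ ≤ (A - ∑ s ∈ T, a s) * ‖g'‖ := h1
        _ ≤ ε' * 1 := h2
        _ = ε' := mul_one _
    -- combine
    set h : Z := f + g' with hh
    have hhn : ‖h‖ ≤ 1 := by
      refine lp.norm_le_of_forall_le' 1 fun t => ?_
      have : ((h : Z) : ∀ _ : S, X) t = (f : ∀ _ : S, X) t + (g' : ∀ _ : S, X) t := by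
        rw [hh, lp.coeFn_add, Pi.add_apply]
      rw [this, hf, MI.sum_sgl_apply, hg'coe]
      by_cases ht : t ∈ T
      · rw [if_pos ht, if_pos ht, add_zero]; exact hx1 t
      · rw [if_neg ht, if_neg ht, zero_add]
        exact (lp.norm_apply_le_norm ENNReal.top_ne_zero g t).trans hg1
    have hGf : G f = 0 := by
      rw [hG, ContinuousLinearMap.sub_apply, hf, MI.F_sum_sgl, MI.Pfun_sum_sgl, sub_self]
    have hFh : F h = MI.Pfun F f + MI.Pfun F g' + G g' := by
      have : F h = MI.Pfun F h + G h := by rw [hG]; simp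
      rw [this, hh, map_add, map_add, hGf]
      ring
    have hFh_le : F h ≤ ‖F‖ := by
      calc F h ≤ ‖F h‖ := le_abs_self _
        _ ≤ ‖F‖ * ‖h‖ := F.le_opNorm _
        _ ≤ ‖F‖ * 1 := mul_le_mul_of_nonneg_left hhn (norm_nonneg F)
        _ = ‖F‖ := mul_one _
    have hlow : ‖MI.Pfun F‖ + ‖G‖ - 4 * ε' ≤ F h := by
      rw [hFh]
      have habs : |MI.Pfun F g'| ≤ ε' := by rwa [Real.norm_eq_abs] at hPg'
      have := (abs_le.mp habs).1
      linarith
    have h5 : ε' * 5 = ε := by rw [hε']; ring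
    linarith
end Main

/-- **`c₀(S, X)` is an M-ideal in `ℓ^∞(S, X)`.**  For a nonempty (discrete) index set `S` and
a Banach space `X`, there is a projection `P` on `ℓ^∞(S, X)*` whose kernel is the annihilator
of `c₀(S, X)` (the bounded functions `g` with `{s | ε ≤ ‖g s‖}` finite for every `ε > 0`) and
such that `‖F‖ = ‖P F‖ + ‖F - P F‖` for every `F ∈ ℓ^∞(S, X)*`. -/
theorem c0_isMIdeal_in_linfty
    (S : Type*) [Nonempty S]
    (X : Type*) [NormedAddCommGroup X] [NormedSpace ℝ X] [CompleteSpace X] :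
    ∃ P : StrongDual ℝ (lp (fun _ : S => X) ⊤) →L[ℝ] StrongDual ℝ (lp (fun _ : S => X) ⊤),
      (∀ F, P (P F) = P F) ∧
      (∀ F : StrongDual ℝ (lp (fun _ : S => X) ⊤),
        P F = 0 ↔ ∀ g : lp (fun _ : S => X) ⊤,
          (∀ ε : ℝ, 0 < ε → {s : S | ε ≤ ‖g s‖}.Finite) → F g = 0) ∧
      (∀ F : StrongDual ℝ (lp (fun _ : S => X) ⊤), ‖F‖ = ‖P F‖ + ‖F - P F‖) := by
  classical
  refine ⟨MI.P, fun F => ?_, fun F => ?_, fun F => ?_⟩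
  · exact MI.Pfun_idem F
  · exact MI.Pfun_eq_zero_iff F
  · exact MI.norm_eq F
end

section
/- Let X be a Banach space such that X* has the Radon–Nikodym property, Ω a compact Hausdorff space, and F a nonzero bounded linear functional on C(Ω, X) represented by F = h d|F|, where |F| is the total variation measure of the associated X*-valued regular Borel measure and h: Ω → X* is Borel measurable with ‖h(ω)‖ = 1 for |F|-almost every ω. Then F attains its norm on the unit sphere of C(Ω, X) if and only if there exists g in the unit sphere of C(Ω, X) with h(ω)(g(ω)) = 1 for |F|-almost every ω. -/
open MeasureTheory NormedSpace Filter Topology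

private lemma measurable_eval_aux
    {Ω : Type*} [MeasurableSpace Ω]
    {X : Type*} [NormedAddCommGroup X] [NormedSpace ℝ X]
    (h : Ω → StrongDual ℝ X) (hmeas : Measurable h)
    {f : Ω → X} (hf : StronglyMeasurable f) :
    Measurable fun ω => (h ω) (f ω) := by
  have key : ∀ s : SimpleFunc Ω X, Measurable fun ω => (h ω) (s ω) := by
    intro s
    refine SimpleFunc.induction ?_ ?_ s
    · intro c A hA
      have : (fun ω => (h ω) ((SimpleFunc.piecewise A hA (SimpleFunc.const Ω c)
          (SimpleFunc.const Ω 0)) ω)) =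
          fun ω => Set.indicator A (fun ω => (h ω) c) ω := by
        funext ω
        by_cases hω : ω ∈ A <;>
          simp [SimpleFunc.piecewise_apply, hω, Set.indicator_of_mem, Set.indicator_of_notMem]
      rw [this]
      exact (hmeas.apply_continuousLinearMap c).indicator hA
    · intro s₁ s₂ _ h1 h2
      have : (fun ω => (h ω) ((s₁ + s₂) ω)) =
          fun ω => (h ω) (s₁ ω) + (h ω) (s₂ ω) := by
        funext ω; simp
      rw [this]
      exact h1.add h2
  have tendsto : ∀ ω, Tendsto (fun n => (h ω) (hf.approx n ω)) atTop
      (𝓝 ((h ω) (f ω))) :=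
    fun ω => ((h ω).continuous.tendsto _).comp (hf.tendsto_approx ω)
  exact measurable_of_tendsto_metrizable (fun n => key (hf.approx n))
    (tendsto_pi_nhds.2 tendsto)

/-- **Vector-valued Phelps theorem.**  Let `X` be a Banach space (with `X*` having the RNP,
which provides the representation below), `Ω` a compact Hausdorff space, and `F` a nonzero
bounded linear functional on `C(Ω, X)` represented as `F = h d|F|`: here `μ = |F|` is the
(finite, regular Borel) total variation measure, `h : Ω → X*` is Borel measurable with
`‖h ω‖ = 1` for `μ`-a.e. `ω`, `F f = ∫ h ω (f ω) dμ` for all `f ∈ C(Ω, X)`, and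
`‖F‖ = μ(Ω)`.  Then `F` attains its norm on the unit sphere of `C(Ω, X)` iff there exists
`g` in the unit sphere of `C(Ω, X)` with `h(ω)(g(ω)) = 1` for `μ`-a.e. `ω`. -/
theorem phelps_vector_valued
    {Ω : Type*} [TopologicalSpace Ω] [CompactSpace Ω] [T2Space Ω]
    [MeasurableSpace Ω] [BorelSpace Ω]
    {X : Type*} [NormedAddCommGroup X] [NormedSpace ℝ X] [CompleteSpace X]
    (μ : Measure Ω) [IsFiniteMeasure μ] [μ.Regular] (hμ : μ ≠ 0)
    (h : Ω → StrongDual ℝ X) (hmeas : Measurable h)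
    (hone : ∀ᵐ ω ∂μ, ‖h ω‖ = 1)
    (F : StrongDual ℝ C(Ω, X))
    (hrep : ∀ f : C(Ω, X), F f = ∫ ω, (h ω) (f ω) ∂μ)
    (hFnorm : ‖F‖ = (μ Set.univ).toReal) :
    (∃ f : C(Ω, X), ‖f‖ = 1 ∧ F f = ‖F‖) ↔
      (∃ g : C(Ω, X), ‖g‖ = 1 ∧ ∀ᵐ ω ∂μ, (h ω) (g ω) = 1) := by
  borelize X
  -- common facts
  have sm : ∀ f : C(Ω, X), StronglyMeasurable (fun ω => f ω) := by
    intro f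
    rw [stronglyMeasurable_iff_measurable_separable]
    exact ⟨f.continuous.measurable, (isCompact_range f.continuous).isSeparable⟩
  have meas : ∀ f : C(Ω, X), Measurable fun ω => (h ω) (f ω) :=
    fun f => measurable_eval_aux h hmeas (sm f)
  have bound : ∀ f : C(Ω, X), ∀ᵐ ω ∂μ, |(h ω) (f ω)| ≤ ‖f‖ := by
    intro f
    filter_upwards [hone] with ω hω
    calc |(h ω) (f ω)| ≤ ‖h ω‖ * ‖f ω‖ := (h ω).le_opNorm (f ω)
      _ = ‖f ω‖ := by rw [hω, one_mul]
      _ ≤ ‖f‖ := f.norm_coe_le_norm ω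
  have integ : ∀ f : C(Ω, X), Integrable (fun ω => (h ω) (f ω)) μ := by
    intro f
    refine Integrable.mono' (integrable_const ‖f‖) (meas f).aestronglyMeasurable ?_
    filter_upwards [bound f] with ω hω
    simpa [Real.norm_eq_abs] using hω
  constructor
  · rintro ⟨f, hf1, hfF⟩
    refine ⟨f, hf1, ?_⟩
    have hint : ∫ ω, (h ω) (f ω) ∂μ = (μ Set.univ).toReal := by
      rw [← hrep, hfF, hFnorm]
    have hle : ∀ᵐ ω ∂μ, 0 ≤ 1 - (h ω) (f ω) := by
      filter_upwards [bound f] with ω hω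
      have := (abs_le.1 (hf1 ▸ hω)).2
      linarith
    have hinteg : Integrable (fun ω => 1 - (h ω) (f ω)) μ :=
      (integrable_const 1).sub (integ f)
    have hzero : ∫ ω, (1 - (h ω) (f ω)) ∂μ = 0 := by
      rw [integral_sub (integrable_const 1) (integ f), hint]
      simp [Measure.real]
    have := (integral_eq_zero_iff_of_nonneg_ae hle hinteg).1 hzero
    filter_upwards [this] with ω hω
    have : (1 : ℝ) - (h ω) (f ω) = 0 := hω
    linarith
  · rintro ⟨g, hg1, hgone⟩
    refine ⟨g, hg1, ?_⟩
    rw [hrep, hFnorm]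
    calc ∫ ω, (h ω) (g ω) ∂μ = ∫ _, (1 : ℝ) ∂μ := integral_congr_ae hgone
      _ = (μ Set.univ).toReal := by simp [Measure.real]
end

section
/- Let X be a Banach space such that X* has the Radon–Nikodym property, and let F ∈ C(Ω, X)* with Radon–Nikodym derivative h: Ω → X* of F with respect to its total variation |F| (so F = h d|F| as an X*-valued measure). Then F(f) = ∫_Ω h(ω)(f(ω)) d|F|(ω) for all f ∈ C(Ω, X). -/
open MeasureTheory NormedSpace

open Set in
lemma exists_approx_tensor {Ω : Type*} [TopologicalSpace Ω] [CompactSpace Ω] [T2Space Ω]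
    {X : Type*} [NormedAddCommGroup X] [NormedSpace ℝ X]
    (f : C(Ω, X)) {ε : ℝ} (hε : 0 < ε) :
    ∃ g ∈ Submodule.span ℝ
      {g : C(Ω, X) | ∃ (φ : C(Ω, ℝ)) (x : X), ⇑g = fun ω => φ ω • x},
      ‖f - g‖ ≤ ε := by
  classical
  set U : Ω → Set Ω := fun c => {ω | ‖f ω - f c‖ < ε} with hU
  have hUopen : ∀ c, IsOpen (U c) := fun c =>
    isOpen_lt ((f.continuous.sub continuous_const).norm) continuous_const
  have hcov : (univ : Set Ω) ⊆ ⋃ c, U c := fun ω _ =>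
    mem_iUnion.2 ⟨ω, by simp [hU, hε]⟩
  obtain ⟨t, ht⟩ := isCompact_univ.elim_finite_subcover U hUopen hcov
  have hcov2 : (univ : Set Ω) ⊆ ⋃ i : t, U i := by
    intro ω hω
    rcases mem_iUnion₂.1 (ht hω) with ⟨c, hc, hωc⟩
    exact mem_iUnion.2 ⟨⟨c, hc⟩, hωc⟩
  obtain ⟨v, hvcov, hvopen, hvcl⟩ :=
    exists_subset_iUnion_closure_subset isClosed_univ (fun i : t => hUopen i)
      (fun x _ => Set.toFinite _) hcov2
  have hgex : ∀ i : t, ∃ g : C(Ω, ℝ), EqOn g 0 (U i)ᶜ ∧ EqOn g 1 (closure (v i)) ∧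
      ∀ ω, g ω ∈ Icc (0:ℝ) 1 := fun i =>
    exists_continuous_zero_one_of_isClosed (hUopen i).isClosed_compl isClosed_closure
      (by rw [disjoint_compl_left_iff]; exact hvcl i)
  choose g hg0 hg1 hg01 using hgex
  set S : Ω → ℝ := fun ω => ∑ i : t, g i ω with hSdef
  have hScont : Continuous S := by
    apply continuous_finset_sum; exact fun i _ => (g i).continuous
  have hS1 : ∀ ω, 1 ≤ S ω := by
    intro ω
    rcases mem_iUnion.1 (hvcov (mem_univ ω)) with ⟨i, hi⟩
    calc (1:ℝ) = g i ω := by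
          have := hg1 i (subset_closure hi); simpa using this.symm
    _ ≤ S ω := Finset.single_le_sum (f := fun j : t => g j ω)
          (fun j _ => (hg01 j ω).1) (Finset.mem_univ i)
  have hSne : ∀ ω, S ω ≠ 0 := fun ω => by
    have := hS1 ω; positivity
  set ψ : t → C(Ω, ℝ) := fun i =>
    ⟨fun ω => g i ω / S ω, (g i).continuous.div hScont hSne⟩ with hψdef
  have hψnn : ∀ (i : t) (ω : Ω), 0 ≤ ψ i ω := fun i ω =>
    div_nonneg (hg01 i ω).1 (le_trans zero_le_one (hS1 ω))
  have hsum : ∀ ω, ∑ i : t, ψ i ω = 1 := by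
    intro ω
    simp only [hψdef, ContinuousMap.coe_mk]
    rw [← Finset.sum_div]
    exact div_self (hSne ω)
  set gm : C(Ω, X) :=
    ∑ i : t, ⟨fun ω => ψ i ω • f i, ((ψ i).continuous.smul continuous_const)⟩ with hgmdef
  refine ⟨gm, Submodule.sum_mem _ fun i _ => Submodule.subset_span ⟨ψ i, f i, rfl⟩, ?_⟩
  rw [ContinuousMap.norm_le _ hε.le]
  intro ω
  have hgm : gm ω = ∑ i : t, ψ i ω • f i := by
    simp [hgmdef]
  rw [ContinuousMap.sub_apply, hgm]
  have expand : f ω - ∑ i : t, ψ i ω • f ↑i = ∑ i : t, ψ i ω • (f ω - f ↑i) := by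
    have h1 : (∑ i : t, ψ i ω) • f ω = f ω := by rw [hsum ω, one_smul]
    calc f ω - ∑ i : t, ψ i ω • f ↑i
        = (∑ i : t, ψ i ω) • f ω - ∑ i : t, ψ i ω • f ↑i := by rw [h1]
    _ = ∑ i : t, (ψ i ω • f ω - ψ i ω • f ↑i) := by
        rw [Finset.sum_smul, Finset.sum_sub_distrib]
    _ = ∑ i : t, ψ i ω • (f ω - f ↑i) := by simp [smul_sub]
  rw [expand]
  calc ‖∑ i : t, ψ i ω • (f ω - f ↑i)‖ ≤ ∑ i : t, ‖ψ i ω • (f ω - f ↑i)‖ :=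
        norm_sum_le _ _
  _ ≤ ∑ i : t, ψ i ω * ε := by
        apply Finset.sum_le_sum
        intro i _
        rw [norm_smul, Real.norm_eq_abs, abs_of_nonneg (hψnn i ω)]
        by_cases hz : ψ i ω = 0
        · simp [hz]
        · have hgnz : g i ω ≠ 0 := by
            intro h0
            apply hz
            simp [hψdef, h0]
          have hωU : ω ∈ U i := by
            by_contra hc
            exact hgnz (by simpa using hg0 i hc)
          exact mul_le_mul_of_nonneg_left (le_of_lt hωU) (hψnn i ω)
  _ = ε := by rw [← Finset.sum_mul, hsum ω, one_mul]



/-- **Action of a representing measure on `C(Ω, X)`.**  Let `X*` have the RNP and let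
`F ∈ C(Ω, X)*` correspond to an `X*`-valued regular Borel measure with total variation
`μ = |F|` and Radon–Nikodym derivative `h : Ω → X*` (Bochner integrable, `‖h ω‖ = 1`
`μ`-a.e.); on elementary tensors `x ⊗ f` (`ω ↦ f(ω) • x`, whose span is dense in
`C(Ω, X)`) this means `F(x ⊗ f) = ∫ f(ω) h(ω)(x) dμ`.  Then
`F f = ∫ h(ω)(f(ω)) dμ` for every `f ∈ C(Ω, X)`. -/
theorem dual_action_eq_integral_of_density
    {Ω : Type*} [TopologicalSpace Ω] [CompactSpace Ω] [T2Space Ω]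
    [MeasurableSpace Ω] [BorelSpace Ω]
    {X : Type*} [NormedAddCommGroup X] [NormedSpace ℝ X] [CompleteSpace X]
    (μ : Measure Ω) [IsFiniteMeasure μ] [μ.Regular]
    (h : Ω → StrongDual ℝ X) (hint : Integrable h μ)
    (hone : ∀ᵐ ω ∂μ, ‖h ω‖ = 1)
    (F : StrongDual ℝ C(Ω, X))
    (hrep : ∀ (f : C(Ω, ℝ)) (x : X),
      F ⟨fun ω => f ω • x, (f.continuous.smul continuous_const)⟩ =
        ∫ ω, f ω * (h ω) x ∂μ) :
    ∀ f : C(Ω, X), F f = ∫ ω, (h ω) (f ω) ∂μ := by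
  classical
  set T : Set C(Ω, X) :=
    {g : C(Ω, X) | ∃ (φ : C(Ω, ℝ)) (x : X), ⇑g = fun ω => φ ω • x} with hT
  have key : ∀ f : C(Ω, X), Integrable (fun ω => h ω (f ω)) μ := by
    intro f
    have hcont : Continuous fun p : StrongDual ℝ X × X => p.1 p.2 :=
      isBoundedBilinearMap_apply.continuous
    have hfmeas : StronglyMeasurable (⇑f) := by
      borelize X
      exact stronglyMeasurable_iff_measurable_separable.2
        ⟨f.continuous.measurable, (isCompact_range f.continuous).isSeparable⟩
    have hmeas : AEStronglyMeasurable (fun ω => h ω (f ω)) μ :=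
      hcont.comp_aestronglyMeasurable
        (hint.aestronglyMeasurable.prodMk hfmeas.aestronglyMeasurable)
    refine (hint.norm.mul_const ‖f‖).mono' hmeas ?_
    filter_upwards with ω
    calc ‖h ω (f ω)‖ ≤ ‖h ω‖ * ‖f ω‖ := (h ω).le_opNorm _
    _ ≤ ‖h ω‖ * ‖f‖ := by
        gcongr
        exact f.norm_coe_le_norm ω
  set Glin : C(Ω, X) →ₗ[ℝ] ℝ :=
    { toFun := fun f => ∫ ω, h ω (f ω) ∂μ
      map_add' := fun f g => by
        simp only [ContinuousMap.add_apply, map_add]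
        exact integral_add (key f) (key g)
      map_smul' := fun c f => by
        simp only [ContinuousMap.smul_apply, _root_.map_smul, smul_eq_mul, RingHom.id_apply]
        exact integral_const_mul c _ } with hGlin
  set G : StrongDual ℝ C(Ω, X) := Glin.mkContinuous (∫ ω, ‖h ω‖ ∂μ) (by
    intro f
    calc ‖∫ ω, h ω (f ω) ∂μ‖ ≤ ∫ ω, ‖h ω (f ω)‖ ∂μ := norm_integral_le_integral_norm _
    _ ≤ ∫ ω, ‖h ω‖ * ‖f‖ ∂μ := by
        refine integral_mono (key f).norm (hint.norm.mul_const _) fun ω => ?_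
        calc ‖h ω (f ω)‖ ≤ ‖h ω‖ * ‖f ω‖ := (h ω).le_opNorm _
        _ ≤ ‖h ω‖ * ‖f‖ := by gcongr; exact f.norm_coe_le_norm ω
    _ = (∫ ω, ‖h ω‖ ∂μ) * ‖f‖ := integral_mul_const _ _) with hG
  have hGapp : ∀ f : C(Ω, X), G f = ∫ ω, h ω (f ω) ∂μ := fun f => rfl
  have hFG : ∀ g ∈ T, F g = G g := by
    rintro g ⟨φ, x, hg⟩
    have hgeq : g = ⟨fun ω => φ ω • x, (φ.continuous.smul continuous_const)⟩ :=
      ContinuousMap.ext fun ω => congrFun hg ω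
    rw [hgeq, hrep φ x, hGapp]
    refine integral_congr_ae (Filter.Eventually.of_forall fun ω => ?_)
    simp
  have hspan : ∀ g ∈ Submodule.span ℝ T, F g = G g := fun g hg =>
    LinearMap.eqOn_span hFG hg
  intro f
  have hsub : F f - G f = 0 := by
    rw [← norm_le_zero_iff]
    refine le_of_forall_pos_le_add fun ε hε => ?_
    have hε' : 0 < ε / (‖F‖ + ‖G‖ + 1) := by positivity
    obtain ⟨g, hgmem, hgnorm⟩ := exists_approx_tensor f hε'
    have hFg : F g = G g := hspan g hgmem
    have : F f - G f = F (f - g) - G (f - g) := by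
      simp only [map_sub]
      rw [hFg]; ring
    rw [this]
    calc ‖F (f - g) - G (f - g)‖ ≤ ‖F (f - g)‖ + ‖G (f - g)‖ := norm_sub_le _ _
    _ ≤ ‖F‖ * ‖f - g‖ + ‖G‖ * ‖f - g‖ := by
        gcongr
        · exact F.le_opNorm _
        · exact G.le_opNorm _
    _ = (‖F‖ + ‖G‖) * ‖f - g‖ := by ring
    _ ≤ (‖F‖ + ‖G‖ + 1) * (ε / (‖F‖ + ‖G‖ + 1)) :=
        mul_le_mul (by linarith [norm_nonneg F, norm_nonneg G]) hgnorm
          (norm_nonneg _) (by positivity)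
    _ = ε := by field_simp
    _ ≤ 0 + ε := by linarith
  rw [← hGapp]
  linarith [hsub]
end

section
/- Let S be a discrete set, X a Banach space, and Φ = ∑_{i=1}^∞ α_i (δ_{k_i} ⊗ x_i*) ∈ C(βS, X)*_1 with α_i ∈ (0,1], ∑ α_i = 1, k_i ∈ S distinct, and x_i* ∈ S(X*). Suppose there is a countable set A = {x_j : j ∈ ℕ} ⊆ X_1 whose norm closure is compact such that every x_i* attains its norm on A (i.e., for each i there is j with x_i*(x_j) = 1). Then Φ attains its norm on the unit sphere of C(βS, X). -/
open NormedSpace Filter Topology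

/-- The functional `δ_ω ⊗ x* : f ↦ x*(f ω)` on `C(Ω, X)`. -/
noncomputable def deltaTensor {Ω : Type*} [TopologicalSpace Ω] [CompactSpace Ω]
    {X : Type*} [NormedAddCommGroup X] [NormedSpace ℝ X]
    (ω : Ω) (x : StrongDual ℝ X) : StrongDual ℝ C(Ω, X) :=
  LinearMap.mkContinuous
    { toFun := fun f : C(Ω, X) => x (f ω)
      map_add' := fun f g => by simp
      map_smul' := fun c f => by simp }
    ‖x‖ (fun f => by
      calc ‖x (f ω)‖ ≤ ‖x‖ * ‖f ω‖ := x.le_opNorm _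
        _ ≤ ‖x‖ * ‖f‖ :=
          mul_le_mul_of_nonneg_left (f.norm_coe_le_norm ω) (norm_nonneg x))

/-- **Norm attainment on `C(βS, X)`.**  Let `S` be a discrete set, `βS` its Stone–Čech
compactification, and `Φ = ∑ α_i (δ_{k_i} ⊗ x_i*)` in the dual unit ball of `C(βS, X)`,
with `α_i ∈ (0, 1]`, `∑ α_i = 1`, `k_i ∈ S` distinct and `x_i* ∈ S(X*)`.  If there is a
countable set `A = {x_j : j ∈ ℕ} ⊆ X₁` with norm-compact closure such that each `x_i*`
attains its norm on `A`, then `Φ` attains its norm on the unit sphere of `C(βS, X)`. -/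
theorem norm_attains_on_stoneCech
    {S : Type*} [TopologicalSpace S] [DiscreteTopology S]
    {X : Type*} [NormedAddCommGroup X] [NormedSpace ℝ X] [CompleteSpace X]
    (Φ : StrongDual ℝ C(StoneCech S, X)) (hΦball : ‖Φ‖ ≤ 1)
    (α : ℕ → ℝ) (hα : ∀ i, α i ∈ Set.Ioc (0 : ℝ) 1) (hαsum : HasSum α 1)
    (k : ℕ → S) (hk : Function.Injective k)
    (x : ℕ → StrongDual ℝ X) (hx : ∀ i, ‖x i‖ = 1)
    (hrep : ∀ f : C(StoneCech S, X),
      Φ f = ∑' i, α i * (deltaTensor (stoneCechUnit (k i)) (x i)) f)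
    (A : ℕ → X) (hA : ∀ j, ‖A j‖ ≤ 1)
    (hAcpt : IsCompact (closure (Set.range A)))
    (hatt : ∀ i, ∃ j, (x i) (A j) = 1) :
    ∃ f : C(StoneCech S, X), ‖f‖ = 1 ∧ Φ f = 1 := by
  classical
  choose j hj using hatt
  set K : Set X := closure (Set.range A) with hK
  have hKc : IsCompact K := hAcpt
  haveI : CompactSpace K := isCompact_iff_compactSpace.mp hKc
  have hmem : ∀ s : S, Function.extend k (fun i => A (j i)) (fun _ => A 0) s ∈ K := by
    intro s
    apply subset_closure
    rcases em (∃ i, k i = s) with ⟨i, rfl⟩ | h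
    · rw [hk.extend_apply]; exact ⟨j i, rfl⟩
    · rw [Function.extend_apply' _ _ _ h]; exact ⟨0, rfl⟩
  set g : S → K := fun s => ⟨Function.extend k (fun i => A (j i)) (fun _ => A 0) s, hmem s⟩
  have hg : Continuous g := continuous_of_discreteTopology
  set e : StoneCech S → K := stoneCechExtend hg with he
  set F : StoneCech S → X := fun ω => (e ω : X)
  have hF : Continuous F := continuous_subtype_val.comp (continuous_stoneCechExtend hg)
  set f : C(StoneCech S, X) := ⟨F, hF⟩
  have hKnorm : ∀ y ∈ K, ‖y‖ ≤ 1 := by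
    intro y hy
    have : K ⊆ Metric.closedBall 0 1 := by
      apply closure_minimal _ Metric.isClosed_closedBall
      rintro _ ⟨n, rfl⟩
      simpa using hA n
    simpa using this hy
  have hfnorm : ‖f‖ ≤ 1 := by
    apply ContinuousMap.norm_le _ zero_le_one |>.mpr
    intro ω
    exact hKnorm _ (e ω).2
  have hval : ∀ i, f (stoneCechUnit (k i)) = A (j i) := by
    intro i
    have h2 : stoneCechExtend hg (stoneCechUnit (k i)) = g (k i) :=
      congrFun (stoneCechExtend_extends hg) (k i)
    show (e (stoneCechUnit (k i)) : X) = _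
    rw [he, h2]
    show (Function.extend k (fun i => A (j i)) (fun _ => A 0) (k i) : X) = _
    rw [hk.extend_apply]
  have hΦf : Φ f = 1 := by
    rw [hrep f]
    have : ∀ i, α i * (deltaTensor (stoneCechUnit (k i)) (x i)) f = α i := by
      intro i
      have : (deltaTensor (stoneCechUnit (k i)) (x i)) f = x i (f (stoneCechUnit (k i))) := rfl
      rw [this, hval i, hj i, mul_one]
    rw [tsum_congr this, hαsum.tsum_eq]
  refine ⟨f, le_antisymm hfnorm ?_, hΦf⟩
  by_contra h
  push_neg at h
  have := Φ.le_opNorm f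
  rw [hΦf] at this
  have h2 : ‖Φ‖ * ‖f‖ ≤ 1 * ‖f‖ := mul_le_mul_of_nonneg_right hΦball (norm_nonneg f)
  simp at this h2
  nlinarith [norm_nonneg f]
end

section
/- Let Ω be a compact Hausdorff space, X a Banach space, and suppose Φ ∈ S(C(Ω, X)*) lies in the norm-closed convex hull of the set {δ_ω ⊗ x* : ω ∈ Ω, x* ∈ X*_1}. Then, viewing Φ as an X*-valued regular Borel measure, the support of Φ is at most countable. -/
open NormedSpace Filter Topology

section Aux

variable {Ω : Type*} [TopologicalSpace Ω] [CompactSpace Ω]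
  {X : Type*} [NormedAddCommGroup X] [NormedSpace ℝ X]

lemma deltaTensor_apply (ω : Ω) (x : StrongDual ℝ X) (f : C(Ω, X)) :
    deltaTensor ω x f = x (f ω) := rfl

lemma norm_deltaTensor_le (ω : Ω) (x : StrongDual ℝ X) : ‖deltaTensor ω x‖ ≤ ‖x‖ :=
  LinearMap.mkContinuous_norm_le _ (norm_nonneg x) _

lemma deltaTensor_sum (ω : Ω) {ι : Type*} (s : Finset ι) (y : ι → StrongDual ℝ X) :
    deltaTensor ω (∑ i ∈ s, y i) = ∑ i ∈ s, deltaTensor ω (y i) := by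
  ext f
  simp [deltaTensor_apply, ContinuousLinearMap.sum_apply]

lemma deltaTensor_smul (ω : Ω) (c : ℝ) (x : StrongDual ℝ X) :
    deltaTensor ω (c • x) = c • deltaTensor ω x := by
  ext f
  simp [deltaTensor_apply]

lemma deltaTensor_neg (ω : Ω) (x : StrongDual ℝ X) :
    deltaTensor ω (-x) = -deltaTensor ω x := by
  ext f
  simp [deltaTensor_apply]

/-- In a real normed space, a functional is nearly normed by a unit vector, with the value
positive. -/
lemma exists_near_norming (y : StrongDual ℝ X) {ε : ℝ} (hε : 0 < ε) :
    ∃ v : X, ‖v‖ ≤ 1 ∧ ‖y‖ - ε ≤ y v := by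
  rcases le_or_gt ‖y‖ ε with h | h
  · exact ⟨0, by simp, by simp [sub_nonpos.2 h]⟩
  · obtain ⟨v, hv, hval⟩ := y.exists_lt_apply_of_lt_opNorm (r := ‖y‖ - ε) (by linarith)
    rcases le_total 0 (y v) with hy | hy
    · exact ⟨v, hv.le, by rw [Real.norm_eq_abs, abs_of_nonneg hy] at hval; linarith⟩
    · refine ⟨-v, by simpa using hv.le, ?_⟩
      rw [Real.norm_eq_abs, abs_of_nonpos hy] at hval
      simpa using hval.le

end Aux

section Norming

variable {Ω : Type*} [TopologicalSpace Ω] [CompactSpace Ω] [T2Space Ω]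
  {X : Type*} [NormedAddCommGroup X] [NormedSpace ℝ X]

lemma sum_norm_le_norm_sum_deltaTensor {n : ℕ} (ω : Fin n → Ω) (hω : Function.Injective ω)
    (y : Fin n → StrongDual ℝ X) :
    ∑ j, ‖y j‖ ≤ ‖∑ j, deltaTensor (ω j) (y j)‖ := by
  rcases Nat.eq_zero_or_pos n with rfl | hn
  · simp
  refine le_of_forall_pos_le_add fun ε hε => ?_
  obtain ⟨U, hU, hdisj⟩ := (Set.finite_range ω).t2_separation
  have hUdisj : ∀ {j k : Fin n}, j ≠ k → Disjoint (U (ω j)) (U (ω k)) := by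
    intro j k hjk
    exact hdisj (Set.mem_range_self j) (Set.mem_range_self k) (hω.ne hjk)
  set ε' := ε / n with hε'def
  have hε' : 0 < ε' := div_pos hε (by exact_mod_cast hn)
  choose v hv hval using fun j => exists_near_norming (y j) hε'
  have hbump : ∀ j : Fin n, ∃ φ : C(Ω, ℝ), Set.EqOn φ 0 (U (ω j))ᶜ ∧ φ (ω j) = 1 ∧
      ∀ w, φ w ∈ Set.Icc (0:ℝ) 1 := by
    intro j
    obtain ⟨φ, h0, h1, h01⟩ := exists_continuous_zero_one_of_isClosed
      (isClosed_compl_iff.2 (hU (ω j)).2) isClosed_singleton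
      (Set.disjoint_singleton_right.2 (by simpa using (hU (ω j)).1))
    exact ⟨φ, h0, h1 rfl, h01⟩
  choose φ hφ0 hφ1 hφ01 using hbump
  -- φ k vanishes off U (ω k)
  have hvan : ∀ (k : Fin n) (w : Ω), w ∉ U (ω k) → φ k w = 0 := fun k w hw => hφ0 k hw
  set f : C(Ω, X) := ⟨fun w => ∑ j, φ j w • v j, by
    apply continuous_finset_sum
    intro j _
    exact ((φ j).continuous).smul continuous_const⟩ with hfdef
  have hfval : ∀ j, f (ω j) = v j := by
    intro j
    have : ∀ k : Fin n, k ≠ j → φ k (ω j) • v k = 0 := by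
      intro k hk
      have hmem : ω j ∉ U (ω k) :=
        fun hmem => Set.disjoint_left.mp (hUdisj hk) hmem (hU (ω j)).1
      simp [hvan k _ hmem]
    calc f (ω j) = ∑ k, φ k (ω j) • v k := rfl
      _ = φ j (ω j) • v j := Finset.sum_eq_single j (fun k _ hk => this k hk) (by simp)
      _ = v j := by rw [hφ1 j, one_smul]
  have hfnorm : ‖f‖ ≤ 1 := by
    refine ContinuousMap.norm_le _ zero_le_one |>.2 fun w => ?_
    by_cases hw : ∃ j, w ∈ U (ω j)
    · obtain ⟨j, hj⟩ := hw
      have : ∀ k : Fin n, k ≠ j → φ k w • v k = 0 := by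
        intro k hk
        have : w ∉ U (ω k) := fun hmem => Set.disjoint_left.mp (hUdisj hk) hmem hj
        simp [hvan k w this]
      have hsum : (f w : X) = φ j w • v j := by
        calc (f w : X) = ∑ k, φ k w • v k := rfl
          _ = φ j w • v j := Finset.sum_eq_single j (fun k _ hk => this k hk) (by simp)
      rw [hsum, norm_smul]
      have h01 := hφ01 j w
      calc ‖φ j w‖ * ‖v j‖ ≤ 1 * 1 := by
            apply mul_le_mul _ (hv j) (norm_nonneg _) zero_le_one
            rw [Real.norm_eq_abs, abs_of_nonneg h01.1]; exact h01.2
        _ = 1 := one_mul 1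
    · push_neg at hw
      have : (f w : X) = 0 := by
        calc (f w : X) = ∑ k, φ k w • v k := rfl
          _ = 0 := Finset.sum_eq_zero fun k _ => by simp [hvan k w (hw k)]
      simp [this]
  set P := ∑ j, deltaTensor (ω j) (y j) with hPdef
  have hPf : P f = ∑ j, (y j) (v j) := by
    rw [hPdef, ContinuousLinearMap.sum_apply]
    exact Finset.sum_congr rfl fun j _ => by rw [deltaTensor_apply, hfval j]
  calc ∑ j, ‖y j‖ ≤ ∑ j : Fin n, ((y j) (v j) + ε') :=
        Finset.sum_le_sum fun j _ => by linarith [hval j]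
    _ = P f + ε := by
        rw [Finset.sum_add_distrib, hPf, Finset.sum_const, Finset.card_univ,
          Fintype.card_fin, nsmul_eq_mul, hε'def]
        field_simp
    _ ≤ ‖P‖ + ε := by
        have := P.le_opNorm f
        have h1 : P f ≤ ‖P‖ * ‖f‖ := (le_abs_self _).trans (by rwa [← Real.norm_eq_abs])
        nlinarith [norm_nonneg P, norm_nonneg f]

end Norming

section Rep

variable {Ω : Type*} [TopologicalSpace Ω] [CompactSpace Ω]
  {X : Type*} [NormedAddCommGroup X] [NormedSpace ℝ X]

/-- `P` is a finite sum of point functionals. -/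
def IsFinRep (P : StrongDual ℝ C(Ω, X)) : Prop :=
  ∃ (n : ℕ) (ω : Fin n → Ω) (y : Fin n → StrongDual ℝ X), P = ∑ j, deltaTensor (ω j) (y j)

lemma isFinRep_deltaTensor (ω : Ω) (x : StrongDual ℝ X) : IsFinRep (deltaTensor ω x) :=
  ⟨1, fun _ => ω, fun _ => x, by simp⟩

lemma IsFinRep.add {P Q : StrongDual ℝ C(Ω, X)} (hP : IsFinRep P) (hQ : IsFinRep Q) :
    IsFinRep (P + Q) := by
  obtain ⟨n, ω₁, y₁, rfl⟩ := hP
  obtain ⟨m, ω₂, y₂, rfl⟩ := hQ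
  refine ⟨n + m, Fin.append ω₁ ω₂, Fin.append y₁ y₂, ?_⟩
  rw [Fin.sum_univ_add]
  simp [Fin.append_left, Fin.append_right]

lemma IsFinRep.smul {P : StrongDual ℝ C(Ω, X)} (c : ℝ) (hP : IsFinRep P) : IsFinRep (c • P) := by
  obtain ⟨n, ω, y, rfl⟩ := hP
  exact ⟨n, ω, fun j => c • y j, by rw [Finset.smul_sum]; simp [deltaTensor_smul]⟩

lemma IsFinRep.neg {P : StrongDual ℝ C(Ω, X)} (hP : IsFinRep P) : IsFinRep (-P) := by
  have := hP.smul (-1)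
  convert this using 1; ext f; simp

lemma IsFinRep.sub {P Q : StrongDual ℝ C(Ω, X)} (hP : IsFinRep P) (hQ : IsFinRep Q) :
    IsFinRep (P - Q) := by
  rw [sub_eq_add_neg]
  exact hP.add hQ.neg

lemma convex_isFinRep : Convex ℝ {P : StrongDual ℝ C(Ω, X) | IsFinRep P} :=
  fun P hP Q hQ a b _ _ _ => (hP.smul a).add (hQ.smul b)

end Rep

section Rep2

variable {Ω : Type*} [TopologicalSpace Ω] [CompactSpace Ω] [T2Space Ω]
  {X : Type*} [NormedAddCommGroup X] [NormedSpace ℝ X]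

/-- Any finite sum of point functionals has a representation with distinct points,
hence with total mass at most the norm. -/
lemma IsFinRep.exists_good_rep {P : StrongDual ℝ C(Ω, X)} (hP : IsFinRep P) :
    ∃ (m : ℕ) (ω : Fin m → Ω) (y : Fin m → StrongDual ℝ X),
      (∑ j, ‖y j‖) ≤ ‖P‖ ∧ P = ∑ j, deltaTensor (ω j) (y j) := by
  obtain ⟨n, ω, y, rfl⟩ := hP
  classical
  set T : Finset Ω := Finset.image ω Finset.univ with hT
  set z : Ω → StrongDual ℝ X := fun t => ∑ j ∈ Finset.univ.filter (fun j => ω j = t), y j with hz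
  have key : ∑ j, deltaTensor (ω j) (y j) = ∑ t ∈ T, deltaTensor t (z t) := by
    rw [← Finset.sum_fiberwise_of_maps_to (g := ω) (t := T)
      (fun j _ => Finset.mem_image_of_mem ω (Finset.mem_univ j))]
    refine Finset.sum_congr rfl fun t _ => ?_
    rw [hz, deltaTensor_sum]
    refine Finset.sum_congr rfl fun j hj => ?_
    rw [(Finset.mem_filter.mp hj).2]
  set e := T.equivFin with he
  set ω' : Fin T.card → Ω := fun i => (e.symm i : Ω) with hω'
  have hinj : Function.Injective ω' :=
    Subtype.coe_injective.comp e.symm.injective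
  set y' : Fin T.card → StrongDual ℝ X := fun i => z (ω' i) with hy'
  have hsum : ∑ t ∈ T, deltaTensor t (z t) = ∑ i, deltaTensor (ω' i) (y' i) := by
    rw [← Finset.sum_coe_sort T (fun t => deltaTensor t (z t))]
    exact (Equiv.sum_comp e.symm (fun t : T => deltaTensor (t : Ω) (z (t : Ω)))).symm
  refine ⟨T.card, ω', y', ?_, by rw [key, hsum]⟩
  rw [key, hsum]
  exact sum_norm_le_norm_sum_deltaTensor ω' hinj y'

end Rep2

/-- **Countable support.**  If `Φ ∈ S(C(Ω, X)*)` lies in the norm-closed convex hull of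
the point functionals `{δ_ω ⊗ x* : ω ∈ Ω, x* ∈ X*₁}`, then (viewed as an `X*`-valued
regular Borel measure) `Φ` has at most countable support: it is a countable sum of point
masses, i.e. there are `ω_i ∈ Ω` and `x_i* ∈ X*` with `∑ ‖x_i*‖ < ∞` and
`Φ f = ∑ x_i*(f(ω_i))` for all `f`. -/
theorem countable_support_of_mem_closed_convexHull
    {Ω : Type*} [TopologicalSpace Ω] [CompactSpace Ω] [T2Space Ω]
    {X : Type*} [NormedAddCommGroup X] [NormedSpace ℝ X] [CompleteSpace X]
    (Φ : StrongDual ℝ C(Ω, X)) (hΦ : ‖Φ‖ = 1)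
    (hmem : Φ ∈ closure (convexHull ℝ
      {T : StrongDual ℝ C(Ω, X) | ∃ (ω : Ω) (x : StrongDual ℝ X), ‖x‖ ≤ 1 ∧ T = deltaTensor ω x})) :
    ∃ (ω : ℕ → Ω) (x : ℕ → StrongDual ℝ X),
      Summable (fun i => ‖x i‖) ∧
      ∀ f : C(Ω, X), Φ f = ∑' i, (x i) (f (ω i)) := by
    classical
  -- Ω is nonempty
  have hne : Nonempty Ω := by
    by_contra h
    rw [not_nonempty_iff] at h
    have : Φ = 0 := by
      ext f
      have : f = 0 := by ext w; exact h.elim w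
      rw [this]; simp
    rw [this] at hΦ; simp at hΦ
  -- Φ is in the closure of finite sums of point functionals
  have hclos : Φ ∈ closure {P : StrongDual ℝ C(Ω, X) | IsFinRep P} := by
    refine closure_mono ?_ hmem
    refine convexHull_min ?_ convex_isFinRep
    rintro T ⟨ω, x, -, rfl⟩
    exact isFinRep_deltaTensor ω x
  -- choose approximants
  have happrox : ∀ n : ℕ, ∃ P : StrongDual ℝ C(Ω, X), IsFinRep P ∧ ‖Φ - P‖ < (1/2 : ℝ)^n := by
    intro n
    obtain ⟨P, hP, hd⟩ := Metric.mem_closure_iff.mp hclos ((1/2 : ℝ)^n)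
      (by positivity)
    exact ⟨P, hP, by rwa [dist_eq_norm] at hd⟩
  choose Ψ hΨfin hΨd using happrox
  -- telescoping differences
  set D : ℕ → StrongDual ℝ C(Ω, X) := fun n => match n with
    | 0 => Ψ 0
    | (k+1) => Ψ (k+1) - Ψ k with hD
  have hDfin : ∀ n, IsFinRep (D n) := by
    intro n
    match n with
    | 0 => exact hΨfin 0
    | (k+1) => exact (hΨfin (k+1)).sub (hΨfin k)
  have hDnorm : ∀ n, ‖D n‖ ≤ 4 * (1/2 : ℝ)^n := by
    intro n
    match n with
    | 0 =>
      have h1 := hΨd 0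
      have h3 : ‖Ψ 0‖ - ‖Φ‖ ≤ ‖Φ - Ψ 0‖ := by
        rw [norm_sub_rev]; exact norm_sub_norm_le _ _
      simp only [pow_zero] at h1 ⊢
      rw [hΦ] at h3
      show ‖Ψ 0‖ ≤ 4 * 1
      linarith
    | (k+1) =>
      have h1 := hΨd (k+1)
      have h2 := hΨd k
      have : ‖D (k+1)‖ ≤ ‖Φ - Ψ k‖ + ‖Φ - Ψ (k+1)‖ := by
        have : D (k+1) = (Φ - Ψ k) - (Φ - Ψ (k+1)) := by
          show Ψ (k+1) - Ψ k = (Φ - Ψ k) - (Φ - Ψ (k+1)); abel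
        rw [this]
        exact norm_sub_le _ _
      have hpow : (1/2 : ℝ)^k = 2 * (1/2 : ℝ)^(k+1) := by ring
      calc ‖D (k+1)‖ ≤ ‖Φ - Ψ k‖ + ‖Φ - Ψ (k+1)‖ := this
        _ ≤ (1/2 : ℝ)^k + (1/2 : ℝ)^(k+1) := by linarith
        _ ≤ 4 * (1/2 : ℝ)^(k+1) := by rw [hpow]; nlinarith [pow_pos (by norm_num : (0:ℝ) < 1/2) (k+1)]
  have hpartial : ∀ N, ∑ n ∈ Finset.range (N+1), D n = Ψ N := by
    intro N
    induction N with
    | zero => simp [hD]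
    | succ k ih => rw [Finset.sum_range_succ, ih]; simp [hD]
  -- good representations of the differences
  choose m ωf yf hyle hyrep using fun n => (hDfin n).exists_good_rep
  -- extend to ℕ-indexed families
  set Y : ℕ → ℕ → StrongDual ℝ X := fun n j => if h : j < m n then yf n ⟨j, h⟩ else 0 with hY
  set W : ℕ → ℕ → Ω := fun n j => if h : j < m n then ωf n ⟨j, h⟩ else Classical.arbitrary Ω
    with hW
  have hYfin : ∀ (n : ℕ) (i : Fin (m n)), Y n i = yf n i ∧ W n i = ωf n i := by
    intro n i
    constructor <;> · simp only [hY, hW, dif_pos i.isLt, Fin.eta]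
  have hYzero : ∀ n j, ¬ j < m n → Y n j = 0 := by
    intro n j h; simp only [hY, dif_neg h]
  -- row sums
  have hrow : ∀ n, ∑' j : ℕ, ‖Y n j‖ = ∑ j : Fin (m n), ‖yf n j‖ := by
    intro n
    rw [tsum_eq_sum (s := Finset.range (m n))
      (fun j hj => by rw [hYzero n j (by simpa using hj)]; simp)]
    rw [← Fin.sum_univ_eq_sum_range (fun j => ‖Y n j‖)]
    exact Finset.sum_congr rfl fun i _ => by rw [(hYfin n i).1]
  have hrowsummable : ∀ n, Summable (fun j => ‖Y n j‖) := by
    intro n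
    apply summable_of_ne_finset_zero (s := Finset.range (m n))
    intro j hj
    rw [hYzero n j (by simpa using hj)]; simp
  have hrowle : ∀ n, ∑' j : ℕ, ‖Y n j‖ ≤ 4 * (1/2 : ℝ)^n := fun n => by
    rw [hrow n]; exact (hyle n).trans (hDnorm n)
  -- summability over ℕ × ℕ
  have hgsummable : Summable (fun p : ℕ × ℕ => ‖Y p.1 p.2‖) := by
    refine (summable_prod_of_nonneg (fun p => norm_nonneg _)).mpr ⟨hrowsummable, ?_⟩
    refine Summable.of_nonneg_of_le (fun n => tsum_nonneg fun j => norm_nonneg _)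
      (fun n => hrowle n) ?_
    exact (summable_geometric_of_lt_one (by norm_num) (by norm_num)).mul_left 4
  -- the equivalence ℕ ≃ ℕ × ℕ
  set e : ℕ ≃ ℕ × ℕ := (Denumerable.eqv (ℕ × ℕ)).symm with he
  refine ⟨fun i => W (e i).1 (e i).2, fun i => Y (e i).1 (e i).2, ?_, ?_⟩
  · exact (e.summable_iff (f := fun p : ℕ × ℕ => ‖Y p.1 p.2‖)).mpr hgsummable
  · intro f
    -- values are summable over ℕ × ℕ
    have hFsummable : Summable (fun p : ℕ × ℕ => Y p.1 p.2 (f (W p.1 p.2))) := by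
      refine Summable.of_norm_bounded (g := fun p : ℕ × ℕ => ‖Y p.1 p.2‖ * ‖f‖)
        (hgsummable.mul_right ‖f‖) fun p => ?_
      calc ‖Y p.1 p.2 (f (W p.1 p.2))‖ ≤ ‖Y p.1 p.2‖ * ‖f (W p.1 p.2)‖ :=
            (Y p.1 p.2).le_opNorm _
        _ ≤ ‖Y p.1 p.2‖ * ‖f‖ :=
            mul_le_mul_of_nonneg_left (f.norm_coe_le_norm _) (norm_nonneg _)
    -- D n applied to f, as an inner tsum
    have hDnf : ∀ n, ∑' j : ℕ, Y n j (f (W n j)) = D n f := by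
      intro n
      rw [tsum_eq_sum (s := Finset.range (m n))
        (fun j hj => by rw [hYzero n j (by simpa using hj)]; simp)]
      rw [← Fin.sum_univ_eq_sum_range (fun j => Y n j (f (W n j)))]
      rw [hyrep n, ContinuousLinearMap.sum_apply]
      exact Finset.sum_congr rfl fun i _ => by
        rw [(hYfin n i).1, (hYfin n i).2, deltaTensor_apply]
    -- D n f is summable with sum Φ f
    have hDfsummable : Summable (fun n => D n f) := by
      refine Summable.of_norm_bounded (g := fun n => (4 * (1/2 : ℝ)^n) * ‖f‖)
        (((summable_geometric_of_lt_one (by norm_num) (by norm_num)).mul_left 4).mul_right ‖f‖)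
        fun n => ?_
      calc ‖D n f‖ ≤ ‖D n‖ * ‖f‖ := (D n).le_opNorm f
        _ ≤ (4 * (1/2 : ℝ)^n) * ‖f‖ :=
          mul_le_mul_of_nonneg_right (hDnorm n) (norm_nonneg f)
    have hΦf : Φ f = ∑' n, D n f := by
      have htend1 : Tendsto (fun N => ∑ n ∈ Finset.range N, D n f) atTop
          (𝓝 (∑' n, D n f)) := hDfsummable.hasSum.tendsto_sum_nat
      have htend1' : Tendsto (fun N => ∑ n ∈ Finset.range (N+1), D n f) atTop
          (𝓝 (∑' n, D n f)) := htend1.comp (tendsto_add_atTop_nat 1)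
      have heq : (fun N => ∑ n ∈ Finset.range (N+1), D n f) = fun N => Ψ N f := by
        funext N
        rw [← hpartial N, ContinuousLinearMap.sum_apply]
      rw [heq] at htend1'
      have htend2 : Tendsto (fun N => Ψ N f) atTop (𝓝 (Φ f)) := by
        rw [tendsto_iff_norm_sub_tendsto_zero]
        refine squeeze_zero (fun N => norm_nonneg _) (g := fun N => (1/2 : ℝ)^N * ‖f‖)
          (fun N => ?_) ?_
        · calc ‖Ψ N f - Φ f‖ = ‖(Φ - Ψ N) (f)‖ := by
                rw [ContinuousLinearMap.sub_apply]; rw [norm_sub_rev]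
            _ ≤ ‖Φ - Ψ N‖ * ‖f‖ := (Φ - Ψ N).le_opNorm f
            _ ≤ (1/2 : ℝ)^N * ‖f‖ :=
              mul_le_mul_of_nonneg_right (hΨd N).le (norm_nonneg f)
        · have := (tendsto_pow_atTop_nhds_zero_of_lt_one (by norm_num : (0:ℝ) ≤ 1/2)
            (by norm_num : (1/2 : ℝ) < 1)).mul_const ‖f‖
          simpa using this
      exact tendsto_nhds_unique htend2 htend1'
    calc Φ f = ∑' n, D n f := hΦf
      _ = ∑' (n) (j), Y n j (f (W n j)) := by
          exact tsum_congr fun n => (hDnf n).symm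
      _ = ∑' p : ℕ × ℕ, Y p.1 p.2 (f (W p.1 p.2)) := by
          rw [Summable.tsum_prod' hFsummable (fun n => ?_)]
          refine Summable.of_norm_bounded (g := fun j => ‖Y n j‖ * ‖f‖)
            ((hrowsummable n).mul_right ‖f‖) fun j => ?_
          calc ‖Y n j (f (W n j))‖ ≤ ‖Y n j‖ * ‖f (W n j)‖ := (Y n j).le_opNorm _
            _ ≤ ‖Y n j‖ * ‖f‖ :=
              mul_le_mul_of_nonneg_left (f.norm_coe_le_norm _) (norm_nonneg _)
      _ = ∑' i, Y (e i).1 (e i).2 (f (W (e i).1 (e i).2)) :=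
          (e.tsum_eq (fun p : ℕ × ℕ => Y p.1 p.2 (f (W p.1 p.2)))).symm
end

section
/- Let Ω be a compact Hausdorff space whose set I of isolated points admits a homeomorphism φ of βI into Ω with φ(k) = k for each k ∈ I, let X be a Banach space, and let Φ = ∑_{i=1}^∞ α_i (δ_{k_i} ⊗ x_i*) ∈ C(Ω, X)*_1 with α_i ∈ (0,1], ∑ α_i = 1, k_i ∈ I distinct, and x_i* ∈ S(X*). If there is a countable set A ⊆ X_1 with norm-compact closure such that each x_i* attains its norm on A, then Φ attains its norm on the unit sphere of C(Ω, X). -/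
open NormedSpace Filter Topology

open Set Function

private lemma tietze_step {Ω : Type*} [TopologicalSpace Ω] [CompactSpace Ω] [T2Space Ω]
    {X : Type*} [NormedAddCommGroup X] [NormedSpace ℝ X]
    {s : Set Ω} (hs : IsClosed s) (u : C(s, X)) {M ε : ℝ} (hM : 0 ≤ M)
    (hu : ∀ c, ‖u c‖ ≤ M) (hε : 0 < ε) :
    ∃ g : C(Ω, X), (∀ y, ‖g y‖ ≤ M) ∧ ∀ c : s, ‖g c - u c‖ ≤ ε := by
  haveI : CompactSpace s := isCompact_iff_compactSpace.mp hs.isCompact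
  have hVopen : ∀ j : s, IsOpen {c : s | ‖u c - u j‖ < ε} := by
    intro j
    exact isOpen_lt ((u.continuous.sub continuous_const).norm) continuous_const
  obtain ⟨t, ht⟩ : ∃ t : Finset s,
      (Set.univ : Set s) ⊆ ⋃ j ∈ t, {c : s | ‖u c - u j‖ < ε} := by
    apply isCompact_univ.elim_finite_subcover _ hVopen
    intro c _
    exact Set.mem_iUnion.2 ⟨c, by simp [hε]⟩
  have hW : ∀ j : s, ∃ W : Set Ω, IsOpen W ∧
      Subtype.val ⁻¹' W = {c : s | ‖u c - u j‖ < ε} := by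
    intro j
    exact isOpen_induced_iff.mp (hVopen j)
  choose W hWo hWe using hW
  set U : Option ↥t → Set Ω := fun o => o.elim sᶜ (fun j => W ↑j) with hU
  have hUo : ∀ o, IsOpen (U o) := by
    rintro (_ | j)
    · exact hs.isOpen_compl
    · exact hWo _
  have hUcov : (Set.univ : Set Ω) ⊆ ⋃ o, U o := by
    intro y _
    by_cases hy : y ∈ s
    · obtain ⟨j, hj, hyj⟩ := Set.mem_iUnion₂.1 (ht (Set.mem_univ (⟨y, hy⟩ : s)))
      refine Set.mem_iUnion.2 ⟨some ⟨j, hj⟩, ?_⟩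
      show y ∈ W j
      have := (hWe j).symm ▸ hyj
      exact this
    · exact Set.mem_iUnion.2 ⟨none, hy⟩
  obtain ⟨f, hf⟩ := PartitionOfUnity.exists_isSubordinate isClosed_univ U hUo hUcov
  refine ⟨⟨fun y => ∑ j : ↥t, f (some j) y • u ↑j, ?_⟩, ?_, ?_⟩
  · exact continuous_finset_sum _ fun j _ => ((f (some j)).continuous.smul continuous_const)
  · intro y
    have hle : ∑ j : ↥t, f (some j) y ≤ 1 := by
      have h1 := f.sum_le_one y
      rw [finsum_eq_sum_of_fintype, Fintype.sum_option] at h1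
      have h0 := f.nonneg none y
      linarith
    calc ‖∑ j : ↥t, f (some j) y • u ↑j‖ ≤ ∑ j : ↥t, ‖f (some j) y • u ↑j‖ :=
          norm_sum_le _ _
      _ ≤ ∑ j : ↥t, f (some j) y * M := by
          refine Finset.sum_le_sum fun j _ => ?_
          rw [norm_smul, Real.norm_of_nonneg (f.nonneg _ y)]
          exact mul_le_mul_of_nonneg_left (hu _) (f.nonneg _ y)
      _ = (∑ j : ↥t, f (some j) y) * M := by rw [Finset.sum_mul]
      _ ≤ 1 * M := mul_le_mul_of_nonneg_right hle hM
      _ = M := one_mul M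
  · intro c
    have hnone : f none (c : Ω) = 0 := by
      by_contra h
      have : (c : Ω) ∈ tsupport (f none) := subset_closure h
      exact (hf none this) c.2
    have hone : ∑ j : ↥t, f (some j) (c : Ω) = 1 := by
      have h1 := f.sum_eq_one (Set.mem_univ (c : Ω))
      rw [finsum_eq_sum_of_fintype, Fintype.sum_option, hnone, zero_add] at h1
      exact h1
    have hrw : (∑ j : ↥t, f (some j) (c : Ω) • u ↑j) - u c
        = ∑ j : ↥t, f (some j) (c : Ω) • (u ↑j - u c) := by
      simp only [smul_sub, Finset.sum_sub_distrib, ← Finset.sum_smul, hone, one_smul]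
    show ‖(∑ j : ↥t, f (some j) (c : Ω) • u ↑j) - u c‖ ≤ ε
    rw [hrw]
    have hterm : ∀ j : ↥t, ‖f (some j) (c : Ω) • (u ↑j - u c)‖
        ≤ f (some j) (c : Ω) * ε := by
      intro j
      rcases eq_or_ne (f (some j) (c : Ω)) 0 with h0 | h0
      · simp [h0]
      · have hcW : (c : Ω) ∈ W ↑j := hf (some j) (subset_closure h0)
        have hcV : ‖u c - u ↑j‖ < ε := by
          have : c ∈ Subtype.val ⁻¹' W (↑j : ↑s) := hcW
          rwa [hWe] at this
        rw [norm_smul, Real.norm_of_nonneg (f.nonneg _ _)]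
        exact mul_le_mul_of_nonneg_left (by rw [norm_sub_rev]; exact hcV.le) (f.nonneg _ _)
    calc ‖∑ j : ↥t, f (some j) (c : Ω) • (u ↑j - u c)‖
        ≤ ∑ j : ↥t, f (some j) (c : Ω) * ε :=
          (norm_sum_le _ _).trans (Finset.sum_le_sum fun j _ => hterm j)
      _ = ε := by rw [← Finset.sum_mul, hone, one_mul]

private lemma tietze_banach {Ω : Type*} [TopologicalSpace Ω] [CompactSpace Ω] [T2Space Ω]
    {X : Type*} [NormedAddCommGroup X] [NormedSpace ℝ X] [CompleteSpace X]
    {s : Set Ω} (hs : IsClosed s) (u : C(s, X)) :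
    ∃ F : C(Ω, X), ∀ c : s, F c = u c := by
  haveI : CompactSpace s := isCompact_iff_compactSpace.mp hs.isCompact
  set C := ‖u‖ + 1 with hC
  have hCpos : 0 < C := by positivity
  set ε : ℕ → ℝ := fun n => (1 / 2 : ℝ) ^ n * C with hε
  have hεpos : ∀ n, 0 < ε n := fun n => by positivity
  have key : ∀ (v : C(s, X)) (δ : ℝ), 0 < δ →
      ∃ g : C(Ω, X), (∀ y, ‖g y‖ ≤ ‖v‖) ∧ ∀ c : s, ‖g c - v c‖ ≤ δ :=
    fun v δ hδ => tietze_step hs v (norm_nonneg v) (fun c => v.norm_coe_le_norm c) hδ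
  set v : ℕ → C(s, X) := fun n =>
    Nat.rec u (fun n vn => vn - ((key vn (ε (n + 1)) (hεpos _)).choose.restrict s)) n with hv
  set g : ℕ → C(Ω, X) := fun n => (key (v n) (ε (n + 1)) (hεpos _)).choose with hg
  have hvsucc : ∀ n, v (n + 1) = v n - (g n).restrict s := fun n => rfl
  have hgspec : ∀ n, (∀ y, ‖g n y‖ ≤ ‖v n‖) ∧ ∀ c : s, ‖g n c - v n c‖ ≤ ε (n + 1) :=
    fun n => (key (v n) (ε (n + 1)) (hεpos _)).choose_spec
  have hvbound : ∀ n, ‖v n‖ ≤ ε n := by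
    intro n
    induction n with
    | zero =>
      show ‖u‖ ≤ (1 / 2 : ℝ) ^ 0 * C
      rw [pow_zero, one_mul]; linarith
    | succ n _ =>
      refine ContinuousMap.norm_le _ (hεpos _).le |>.2 fun c => ?_
      rw [hvsucc]
      simp only [ContinuousMap.sub_apply, ContinuousMap.restrict_apply]
      rw [← norm_neg, neg_sub]
      exact (hgspec n).2 c
  have hgbound : ∀ n, ‖g n‖ ≤ ε n := by
    intro n
    refine ContinuousMap.norm_le _ (hεpos _).le |>.2 fun y => ?_
    exact ((hgspec n).1 y).trans (hvbound n)
  have hsummable : Summable g :=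
    Summable.of_norm_bounded (summable_geometric_two.mul_right C) hgbound
  refine ⟨∑' n, g n, fun c => ?_⟩
  have hF : HasSum g (∑' n, g n) := hsummable.hasSum
  have hFc : HasSum (fun n => g n (c : Ω)) ((∑' n, g n) (c : Ω)) :=
    (ContinuousMap.evalCLM ℝ (c : Ω)).hasSum hF
  have hpartial : ∀ n, ∑ i ∈ Finset.range n, g i (c : Ω) = u c - v n c := by
    intro n
    induction n with
    | zero =>
      simp only [Finset.range_zero, Finset.sum_empty]
      show (0 : X) = u c - u c
      rw [sub_self]
    | succ n ih =>
      rw [Finset.sum_range_succ, ih, hvsucc]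
      simp only [ContinuousMap.sub_apply, ContinuousMap.restrict_apply]
      abel
  have hvzero : Filter.Tendsto (fun n => v n c) Filter.atTop (nhds 0) := by
    rw [tendsto_zero_iff_norm_tendsto_zero]
    refine squeeze_zero (fun n => norm_nonneg _) (fun n => ((v n).norm_coe_le_norm c).trans (hvbound n)) ?_
    have h2 : Filter.Tendsto (fun n => (1 / 2 : ℝ) ^ n * C) Filter.atTop (nhds (0 * C)) :=
      (tendsto_pow_atTop_nhds_zero_of_lt_one (by norm_num) (by norm_num)).mul_const C
    rw [zero_mul] at h2
    exact h2
  have h1 : Filter.Tendsto (fun n => ∑ i ∈ Finset.range n, g i (c : Ω))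
      Filter.atTop (nhds (u c)) := by
    simp only [hpartial]
    simpa using (tendsto_const_nhds (x := u c)).sub hvzero
  exact tendsto_nhds_unique hFc.tendsto_sum_nat h1


/-- **Norm attainment when `βI` embeds into `Ω`.**  Let `Ω` be a compact Hausdorff space
whose set `I` of isolated points admits a homeomorphism `φ` of `βI` into `Ω` fixing each
`k ∈ I`, and let `Φ = ∑ α_i (δ_{k_i} ⊗ x_i*)` be in the dual unit ball of `C(Ω, X)` with
`α_i ∈ (0, 1]`, `∑ α_i = 1`, `k_i ∈ I` distinct and `x_i* ∈ S(X*)`.  If there is a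
countable set `A ⊆ X₁` with norm-compact closure on which every `x_i*` attains its norm,
then `Φ` attains its norm on the unit sphere of `C(Ω, X)`. -/
theorem norm_attains_of_stoneCech_embedding
    {Ω : Type*} [TopologicalSpace Ω] [CompactSpace Ω] [T2Space Ω]
    {X : Type*} [NormedAddCommGroup X] [NormedSpace ℝ X] [CompleteSpace X]
    (φ : StoneCech {ω : Ω // IsOpen ({ω} : Set Ω)} → Ω)
    (hφ : Topology.IsEmbedding φ)
    (hφfix : ∀ k : {ω : Ω // IsOpen ({ω} : Set Ω)}, φ (stoneCechUnit k) = (k : Ω))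
    (Φ : StrongDual ℝ C(Ω, X)) (hΦball : ‖Φ‖ ≤ 1)
    (α : ℕ → ℝ) (hα : ∀ i, α i ∈ Set.Ioc (0 : ℝ) 1) (hαsum : HasSum α 1)
    (k : ℕ → {ω : Ω // IsOpen ({ω} : Set Ω)}) (hk : Function.Injective k)
    (x : ℕ → StrongDual ℝ X) (hx : ∀ i, ‖x i‖ = 1)
    (hrep : ∀ f : C(Ω, X), Φ f = ∑' i, α i * (deltaTensor (k i : Ω) (x i)) f)
    (A : ℕ → X) (hA : ∀ j, ‖A j‖ ≤ 1)
    (hAcpt : IsCompact (closure (Set.range A)))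
    (hatt : ∀ i, ∃ j, (x i) (A j) = 1) :
    ∃ f : C(Ω, X), ‖f‖ = 1 ∧ Φ f = 1 := by
  classical
  haveI : DiscreteTopology {ω : Ω // IsOpen ({ω} : Set Ω)} := by
    rw [discreteTopology_iff_isOpen_singleton]
    intro b
    have hset : ({b} : Set {ω : Ω // IsOpen ({ω} : Set Ω)})
        = Subtype.val ⁻¹' {(b : Ω)} := by
      ext y
      exact Subtype.ext_iff
    rw [hset]
    exact b.2.preimage continuous_subtype_val
  set a : ℕ → X := fun i => A (hatt i).choose with ha
  have hxa : ∀ i, x i (a i) = 1 := fun i => (hatt i).choose_spec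
  have haA : ∀ i, ‖a i‖ ≤ 1 := fun i => hA _
  set K := closure (Set.range A) with hK
  haveI : CompactSpace K := isCompact_iff_compactSpace.mp hAcpt
  have memK : ∀ j, A j ∈ K := fun j => subset_closure ⟨j, rfl⟩
  set g0 : {ω : Ω // IsOpen ({ω} : Set Ω)} → K :=
    Function.extend k (fun i => ⟨a i, memK _⟩) (fun _ => ⟨A 0, memK 0⟩) with hg0def
  have hg0 : ∀ i, g0 (k i) = ⟨a i, memK _⟩ := fun i => hk.extend_apply _ _ i
  have hg0c : Continuous g0 := continuous_of_discreteTopology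
  set h := stoneCechExtend hg0c with hh
  set e := hφ.toHomeomorph with he
  have hsclosed : IsClosed (Set.range φ) := (isCompact_range hφ.continuous).isClosed
  set u : C(Set.range φ, X) :=
    ⟨fun c => (h (e.symm c) : X),
      continuous_subtype_val.comp ((continuous_stoneCechExtend hg0c).comp e.symm.continuous)⟩
    with hu
  obtain ⟨F, hF⟩ := tietze_banach hsclosed u
  -- radial retraction
  set r : X → X := fun z => (max 1 ‖z‖)⁻¹ • z with hr
  have hrmaxpos : ∀ z : X, (0:ℝ) < max 1 ‖z‖ := fun z => lt_of_lt_of_le one_pos (le_max_left _ _)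
  have hrc : Continuous r :=
    ((continuous_const.max continuous_norm).inv₀ fun z => (hrmaxpos z).ne').smul continuous_id
  have hrnorm : ∀ z : X, ‖r z‖ ≤ 1 := by
    intro z
    rw [hr]
    simp only [norm_smul, norm_inv, Real.norm_eq_abs, abs_of_pos (hrmaxpos z)]
    calc (max 1 ‖z‖)⁻¹ * ‖z‖ ≤ (max 1 ‖z‖)⁻¹ * max 1 ‖z‖ :=
          mul_le_mul_of_nonneg_left (le_max_right _ _) (inv_nonneg.mpr (hrmaxpos z).le)
      _ = 1 := inv_mul_cancel₀ (hrmaxpos z).ne'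
  have hrid : ∀ z : X, ‖z‖ ≤ 1 → r z = z := by
    intro z hz
    rw [hr]
    simp [max_eq_left hz]
  set f : C(Ω, X) := ⟨r ∘ F, hrc.comp F.continuous⟩ with hf
  -- key evaluation
  have hki : ∀ i, (k i : Ω) ∈ Set.range φ := fun i => ⟨stoneCechUnit (k i), hφfix (k i)⟩
  have hfk : ∀ i, f (k i : Ω) = a i := by
    intro i
    have hFk : F (k i : Ω) = u ⟨(k i : Ω), hki i⟩ := hF ⟨(k i : Ω), hki i⟩
    have hesymm : e.symm ⟨(k i : Ω), hki i⟩ = stoneCechUnit (k i) := by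
      have h1 : e (stoneCechUnit (k i)) = ⟨(k i : Ω), hki i⟩ := by
        apply Subtype.ext
        show φ (stoneCechUnit (k i)) = (k i : Ω)
        exact hφfix (k i)
      rw [← h1, Homeomorph.symm_apply_apply]
    have hval : u ⟨(k i : Ω), hki i⟩ = a i := by
      rw [hu]
      show (h (e.symm ⟨(k i : Ω), hki i⟩) : X) = a i
      rw [hesymm, hh]
      have := congrFun (stoneCechExtend_extends hg0c) (k i)
      simp only [Function.comp_apply] at this
      rw [this, hg0 i]
    show r (F (k i : Ω)) = a i
    rw [hFk, hval]
    exact hrid _ (haA i)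
  have hfnorm1 : ∀ y, ‖f y‖ ≤ 1 := fun y => hrnorm _
  have hΦf : Φ f = 1 := by
    rw [hrep f]
    have : ∀ i, α i * (deltaTensor (k i : Ω) (x i)) f = α i := by
      intro i
      have : (deltaTensor (k i : Ω) (x i)) f = x i (f (k i : Ω)) := rfl
      rw [this, hfk i, hxa i, mul_one]
    rw [tsum_congr this]
    exact hαsum.tsum_eq
  refine ⟨f, ?_, hΦf⟩
  refine le_antisymm ((ContinuousMap.norm_le _ zero_le_one).2 hfnorm1) ?_
  have h1 : (1:ℝ) = Φ f := hΦf.symm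
  calc (1:ℝ) = Φ f := h1
    _ ≤ ‖Φ f‖ := le_abs_self _
    _ ≤ ‖Φ‖ * ‖f‖ := Φ.le_opNorm f
    _ ≤ 1 * ‖f‖ := mul_le_mul_of_nonneg_right hΦball (norm_nonneg f)
    _ = ‖f‖ := one_mul _
end
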